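/- arXiv:1109.3804 — 2 statements merged into one kernel-verified Lean document; each statement's English description precedes it below -/
import Mathlib

section
/- Under assumption (LD), if e is differentiable on (a,b), then for every θ ∈ (D⁺e(a), D⁻e(b)), liminf_t (1/w_t) log P_t({x : X_t(x) > θ w_t}) ≥ −φ(θ), where φ(θ) = sup_{s∈[a,b]}(θs − e(s)). -/
open Filter MeasureTheory

/-- Fenchel–Legendre transform of a function `e` on `[a,b]`. -/
noncomputable def flt (a b : ℝ) (e : ℝ → ℝ) (θ : ℝ) : ℝ :=
  sSup ((fun s => θ * s - e s) '' Set.Icc a b)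

open Set Topology

set_option maxHeartbeats 1000000

private lemma freq_zero_aux {f : ℝ → ℝ} {L : ℝ} (hL : L ≠ 0)
    (h : Tendsto f atTop (𝓝 L)) {p : ℝ → Prop} (hp : ∀ t, p t → f t = 0) :
    ∀ᶠ t in atTop, ¬ p t := by
  by_contra hc
  rw [Filter.not_eventually] at hc
  simp only [not_not] at hc
  have hne : (atTop ⊓ 𝓟 {t | p t}).NeBot := frequently_iff_neBot.mp hc
  have h1 : Tendsto f (atTop ⊓ 𝓟 {t | p t}) (𝓝 L) := h.mono_left inf_le_left
  have h2 : Tendsto f (atTop ⊓ 𝓟 {t | p t}) (𝓝 0) := by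
    refine Tendsto.congr' ?_ tendsto_const_nhds
    have he : ∀ᶠ t in atTop ⊓ 𝓟 {t | p t}, f t = 0 :=
      eventually_inf_principal.mpr (Eventually.of_forall fun t ht => hp t ht)
    filter_upwards [he] with t ht using ht.symm
  exact hL (tendsto_nhds_unique h1 h2)

private lemma exists_right_decrease {e : ℝ → ℝ} {d θ a b : ℝ} (hab : a < b)
    (hda : HasDerivWithinAt e d (Set.Ici a) a) (hdθ : d < θ) :
    ∃ u ∈ Set.Ioo a b, e u - θ * u < e a - θ * a := by
  have hg : HasDerivWithinAt (fun s => e s - θ * s) (d - θ) (Set.Ici a) a := by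
    have h := (hda.sub (((hasDerivAt_id a).const_mul θ).hasDerivWithinAt) :
      HasDerivWithinAt (fun s => e s - θ * id s) (d - θ * 1) (Set.Ici a) a)
    simp only [id_eq, mul_one] at h; exact h
  have hs := hasDerivWithinAt_iff_tendsto_slope.mp hg
  rw [Set.Ici_sdiff_left] at hs
  have h1 : ∀ᶠ u in 𝓝[>] a, slope (fun s => e s - θ * s) a u < 0 :=
    hs.eventually_lt_const (by linarith)
  have h2 : ∀ᶠ u in 𝓝[>] a, u ∈ Set.Ioo a b :=
    eventually_of_mem (Ioo_mem_nhdsGT_of_mem ⟨le_refl a, hab⟩) (fun x hx => hx)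
  obtain ⟨u, hu1, hu2⟩ := (h1.and h2).exists
  refine ⟨u, hu2, ?_⟩
  have hua : 0 < u - a := sub_pos.mpr hu2.1
  rw [slope_def_field] at hu1
  have := mul_lt_mul_of_pos_right hu1 hua
  rw [div_mul_cancel₀ _ (ne_of_gt hua), zero_mul] at this
  linarith

private lemma exists_left_decrease {e : ℝ → ℝ} {d θ a b : ℝ} (hab : a < b)
    (hdb : HasDerivWithinAt e d (Set.Iic b) b) (hdθ : θ < d) :
    ∃ v ∈ Set.Ioo a b, e v - θ * v < e b - θ * b := by
  have hg : HasDerivWithinAt (fun s => e s - θ * s) (d - θ) (Set.Iic b) b := by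
    have h := (hdb.sub (((hasDerivAt_id b).const_mul θ).hasDerivWithinAt) :
      HasDerivWithinAt (fun s => e s - θ * id s) (d - θ * 1) (Set.Iic b) b)
    simp only [id_eq, mul_one] at h; exact h
  have hs := hasDerivWithinAt_iff_tendsto_slope.mp hg
  rw [Set.Iic_sdiff_right] at hs
  have h1 : ∀ᶠ u in 𝓝[<] b, 0 < slope (fun s => e s - θ * s) b u :=
    hs.eventually_const_lt (by linarith)
  have h2 : ∀ᶠ u in 𝓝[<] b, u ∈ Set.Ioo a b :=
    eventually_of_mem (Ioo_mem_nhdsLT_of_mem ⟨hab, le_refl b⟩) (fun x hx => hx)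
  obtain ⟨v, hv1, hv2⟩ := (h1.and h2).exists
  refine ⟨v, hv2, ?_⟩
  have hvb : v - b < 0 := sub_neg.mpr hv2.2
  rw [slope_def_field] at hv1
  have := mul_lt_mul_of_neg_right hv1 hvb
  rw [div_mul_cancel₀ _ (ne_of_lt hvb), zero_mul] at this
  linarith

private lemma split_bound {Ω : Type*} [MeasurableSpace Ω] (μ : Measure Ω)
    (X : Ω → ℝ) (hX : Measurable X) (s u v W θ θ' : ℝ)
    (hus : u ≤ s) (hsv : s ≤ v) (hW : 0 ≤ W) :
    ∫⁻ x, ENNReal.ofReal (Real.exp (s * X x)) ∂μ ≤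
      ENNReal.ofReal (Real.exp ((s - u) * (θ * W))) *
        ∫⁻ x, ENNReal.ofReal (Real.exp (u * X x)) ∂μ
      + ENNReal.ofReal (Real.exp ((s - v) * (θ' * W))) *
        ∫⁻ x, ENNReal.ofReal (Real.exp (v * X x)) ∂μ
      + ENNReal.ofReal (Real.exp (max (s * θ) (s * θ') * W)) * μ {x | θ * W < X x} := by
  have hmeas : ∀ c : ℝ, Measurable fun x => ENNReal.ofReal (Real.exp (c * X x)) :=
    fun c => (Real.measurable_exp.comp (hX.const_mul c)).ennreal_ofReal
  set A : Set Ω := {x | X x ≤ θ * W} with hA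
  set B : Set Ω := {x | θ * W < X x ∧ X x ≤ θ' * W} with hB
  set C : Set Ω := {x | θ' * W < X x} with hC
  have hcover : (univ : Set Ω) ⊆ A ∪ B ∪ C := by
    intro x _
    rcases le_or_gt (X x) (θ * W) with h1 | h1
    · exact Or.inl (Or.inl h1)
    rcases le_or_gt (X x) (θ' * W) with h2 | h2
    · exact Or.inl (Or.inr ⟨h1, h2⟩)
    · exact Or.inr h2
  have step1 : ∫⁻ x, ENNReal.ofReal (Real.exp (s * X x)) ∂μ ≤
      ∫⁻ x in A, ENNReal.ofReal (Real.exp (s * X x)) ∂μ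
      + ∫⁻ x in B, ENNReal.ofReal (Real.exp (s * X x)) ∂μ
      + ∫⁻ x in C, ENNReal.ofReal (Real.exp (s * X x)) ∂μ := by
    calc ∫⁻ x, ENNReal.ofReal (Real.exp (s * X x)) ∂μ
        = ∫⁻ x in univ, ENNReal.ofReal (Real.exp (s * X x)) ∂μ :=
          (setLIntegral_univ _).symm
      _ ≤ ∫⁻ x in A ∪ B ∪ C, ENNReal.ofReal (Real.exp (s * X x)) ∂μ :=
          lintegral_mono_set hcover
      _ ≤ (∫⁻ x in A ∪ B, ENNReal.ofReal (Real.exp (s * X x)) ∂μ)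
          + ∫⁻ x in C, ENNReal.ofReal (Real.exp (s * X x)) ∂μ := lintegral_union_le _ _ _
      _ ≤ _ := add_le_add_left (lintegral_union_le _ _ _) _
  have hu : ∫⁻ x in A, ENNReal.ofReal (Real.exp (s * X x)) ∂μ ≤
      ENNReal.ofReal (Real.exp ((s - u) * (θ * W))) *
        ∫⁻ x, ENNReal.ofReal (Real.exp (u * X x)) ∂μ := by
    calc ∫⁻ x in A, ENNReal.ofReal (Real.exp (s * X x)) ∂μ
        ≤ ∫⁻ x in A, ENNReal.ofReal (Real.exp ((s - u) * (θ * W)))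
            * ENNReal.ofReal (Real.exp (u * X x)) ∂μ := by
          refine setLIntegral_mono (by exact (hmeas u).const_mul _) ?_
          intro x hx
          rw [← ENNReal.ofReal_mul (Real.exp_nonneg _), ← Real.exp_add]
          refine ENNReal.ofReal_le_ofReal (Real.exp_le_exp.mpr ?_)
          have h1 : (s - u) * X x ≤ (s - u) * (θ * W) :=
            mul_le_mul_of_nonneg_left hx (sub_nonneg.mpr hus)
          nlinarith [h1]
      _ ≤ ∫⁻ x, ENNReal.ofReal (Real.exp ((s - u) * (θ * W)))
            * ENNReal.ofReal (Real.exp (u * X x)) ∂μ := setLIntegral_le_lintegral _ _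
      _ = _ := lintegral_const_mul _ (hmeas u)
  have hv : ∫⁻ x in C, ENNReal.ofReal (Real.exp (s * X x)) ∂μ ≤
      ENNReal.ofReal (Real.exp ((s - v) * (θ' * W))) *
        ∫⁻ x, ENNReal.ofReal (Real.exp (v * X x)) ∂μ := by
    calc ∫⁻ x in C, ENNReal.ofReal (Real.exp (s * X x)) ∂μ
        ≤ ∫⁻ x in C, ENNReal.ofReal (Real.exp ((s - v) * (θ' * W)))
            * ENNReal.ofReal (Real.exp (v * X x)) ∂μ := by
          refine setLIntegral_mono (by exact (hmeas v).const_mul _) ?_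
          intro x hx
          rw [← ENNReal.ofReal_mul (Real.exp_nonneg _), ← Real.exp_add]
          refine ENNReal.ofReal_le_ofReal (Real.exp_le_exp.mpr ?_)
          have hx' : θ' * W ≤ X x := le_of_lt hx
          have h1 : (s - v) * X x ≤ (s - v) * (θ' * W) :=
            mul_le_mul_of_nonpos_left hx' (sub_nonpos.mpr hsv)
          nlinarith [h1]
      _ ≤ ∫⁻ x, ENNReal.ofReal (Real.exp ((s - v) * (θ' * W)))
            * ENNReal.ofReal (Real.exp (v * X x)) ∂μ := setLIntegral_le_lintegral _ _
      _ = _ := lintegral_const_mul _ (hmeas v)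
  have hb : ∫⁻ x in B, ENNReal.ofReal (Real.exp (s * X x)) ∂μ ≤
      ENNReal.ofReal (Real.exp (max (s * θ) (s * θ') * W)) * μ {x | θ * W < X x} := by
    calc ∫⁻ x in B, ENNReal.ofReal (Real.exp (s * X x)) ∂μ
        ≤ ∫⁻ _x in B, ENNReal.ofReal (Real.exp (max (s * θ) (s * θ') * W)) ∂μ := by
          refine setLIntegral_mono measurable_const ?_
          intro x hx
          refine ENNReal.ofReal_le_ofReal (Real.exp_le_exp.mpr ?_)
          rcases le_or_gt 0 s with hs0 | hs0
          · have h1 : s * X x ≤ s * (θ' * W) := mul_le_mul_of_nonneg_left hx.2 hs0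
            calc s * X x ≤ s * (θ' * W) := h1
              _ = (s * θ') * W := by ring
              _ ≤ max (s * θ) (s * θ') * W :=
                  mul_le_mul_of_nonneg_right (le_max_right _ _) hW
          · have h1 : s * X x ≤ s * (θ * W) :=
              mul_le_mul_of_nonpos_left (le_of_lt hx.1) (le_of_lt hs0)
            calc s * X x ≤ s * (θ * W) := h1
              _ = (s * θ) * W := by ring
              _ ≤ max (s * θ) (s * θ') * W :=
                  mul_le_mul_of_nonneg_right (le_max_left _ _) hW
      _ = ENNReal.ofReal (Real.exp (max (s * θ) (s * θ') * W)) * μ B :=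
          setLIntegral_const _ _
      _ ≤ _ := mul_le_mul_right (measure_mono fun x hx => hx.1) _
  refine step1.trans (((add_le_add (add_le_add hu hb) hv)).trans_eq (add_right_comm _ _ _))

/-- Lower large deviation bound: under assumption (LD), if `e` is differentiable on `(a,b)`
then for `θ ∈ (D⁺e(a), D⁻e(b))`:
`liminf (1/w_t) log P_t(X_t > θ w_t) ≥ −φ(θ)`. -/
theorem ld_lower_bound {Ω : ℝ → Type*} [∀ t, MeasurableSpace (Ω t)]
    (P : ∀ t, Measure (Ω t)) (hP : ∀ t, IsFiniteMeasure (P t))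
    (X : ∀ t, Ω t → ℝ) (hX : ∀ t, Measurable (X t))
    (w : ℝ → ℝ) (hw : ∀ t, 0 < w t) (hwtop : Tendsto w atTop atTop)
    (a b : ℝ) (hab : a < b)
    (e : ℝ → ℝ)
    (he : ∀ s ∈ Set.Icc a b, Tendsto
      (fun t => Real.log ((∫⁻ x, ENNReal.ofReal (Real.exp (s * X t x)) ∂ (P t)).toReal) / w t)
      atTop (nhds (e s)))
    (hecont : ContinuousOn e (Set.Icc a b))
    (hediff : ∀ s ∈ Set.Ioo a b, DifferentiableAt ℝ e s)
    (da db : ℝ)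
    (hda : HasDerivWithinAt e da (Set.Ici a) a)
    (hdb : HasDerivWithinAt e db (Set.Iic b) b)
    (θ : ℝ) (hθ : θ ∈ Set.Ioo da db) :
    ((-(flt a b e θ) : ℝ) : EReal) ≤
      Filter.liminf
        (fun t => ((Real.log ((P t {x | θ * w t < X t x}).toReal) / w t : ℝ) : EReal)) atTop := by
  obtain ⟨hθ1, hθ2⟩ := hθ
  have hφ_ge : ∀ s ∈ Set.Icc a b, θ * s - e s ≤ flt a b e θ := by
    intro s hs
    refine le_csSup ?_ ⟨s, hs, rfl⟩
    exact (isCompact_Icc.image_of_continuousOn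
      (((continuous_const.mul continuous_id).continuousOn).sub hecont)).bddAbove
  have main : ∀ ε : ℝ, 0 < ε → ∀ᶠ t in atTop,
      -(flt a b e θ) - ε ≤ Real.log ((P t {x | θ * w t < X t x}).toReal) / w t := by
    intro ε hε
    set Kb : ℝ := max |a| |b| with hKbdef
    have hKb0 : (0:ℝ) ≤ Kb := le_trans (abs_nonneg a) (le_max_left _ _)
    set κ : ℝ := min (ε / (2 * (Kb + 1))) ((db - θ) / 2) with hκdef
    have hκpos : 0 < κ := lt_min (by positivity) (by linarith only [hθ2])
    have hκle : κ ≤ ε / (2 * (Kb + 1)) := min_le_left _ _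
    have hκle2 : κ ≤ (db - θ) / 2 := min_le_right _ _
    set θ' : ℝ := θ + κ with hθ'def
    have hθθ' : θ < θ' := by rw [hθ'def]; linarith only [hκpos]
    have hθ'db : θ' < db := by rw [hθ'def]; linarith only [hκle2, hθ2]
    have hdaθ' : da < θ' := by rw [hθ'def]; linarith only [hθ1, hκpos]
    set δ : ℝ := κ / 2 with hδdef
    have hδpos : 0 < δ := by rw [hδdef]; linarith only [hκpos]
    set g : ℝ → ℝ := fun s => e s - θ' * s with hgdef
    have hgcont : ContinuousOn g (Set.Icc a b) := by
      rw [hgdef]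
      exact hecont.sub ((continuous_const.mul continuous_id).continuousOn)
    obtain ⟨sm, hsmIcc, hsmin⟩ :=
      isCompact_Icc.exists_isMinOn (Set.nonempty_Icc.mpr hab.le) hgcont
    set m : ℝ := g sm with hmdef
    have hmle : ∀ x ∈ Set.Icc a b, m ≤ g x := fun x hx => isMinOn_iff.mp hsmin x hx
    set M : Set ℝ := Set.Icc a b ∩ g ⁻¹' {m} with hMdef
    have hMclosed : IsClosed M :=
      hgcont.preimage_isClosed_of_isClosed isClosed_Icc isClosed_singleton
    have hMne : M.Nonempty := ⟨sm, hsmIcc, rfl⟩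
    have hMbddB : BddBelow M := ⟨a, fun x hx => hx.1.1⟩
    have hMbddA : BddAbove M := ⟨b, fun x hx => hx.1.2⟩
    set s₀ : ℝ := sInf M with hs₀def
    set s₁ : ℝ := sSup M with hs₁def
    have hs₀M : s₀ ∈ M := hMclosed.csInf_mem hMne hMbddB
    have hs₁M : s₁ ∈ M := hMclosed.csSup_mem hMne hMbddA
    have hs₀s₁ : s₀ ≤ s₁ := csInf_le_csSup hMne hMbddB hMbddA
    have hgs₀ : g s₀ = m := hs₀M.2
    have hgs₁ : g s₁ = m := hs₁M.2
    have hga : m < g a := by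
      obtain ⟨u', hu'Ioo, hu'⟩ := exists_right_decrease hab hda hdaθ'
      have h3 : g u' < g a := by simp only [hgdef]; exact hu'
      exact lt_of_le_of_lt (hmle u' (Set.Ioo_subset_Icc_self hu'Ioo)) h3
    have hgb : m < g b := by
      obtain ⟨v', hv'Ioo, hv'⟩ := exists_left_decrease hab hdb hθ'db
      have h3 : g v' < g b := by simp only [hgdef]; exact hv'
      exact lt_of_le_of_lt (hmle v' (Set.Ioo_subset_Icc_self hv'Ioo)) h3
    have has₀ : a < s₀ := by
      rcases lt_or_eq_of_le hs₀M.1.1 with h | h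
      · exact h
      · exfalso; rw [← h] at hgs₀; exact (ne_of_gt hga) hgs₀
    have hs₁b : s₁ < b := by
      rcases lt_or_eq_of_le hs₁M.1.2 with h | h
      · exact h
      · exfalso; rw [h] at hgs₁; exact (ne_of_gt hgb) hgs₁
    have hs₀b : s₀ < b := lt_of_le_of_lt hs₀s₁ hs₁b
    have has₁ : a < s₁ := lt_of_lt_of_le has₀ hs₀s₁
    have hs₀Ioo : s₀ ∈ Set.Ioo a b := ⟨has₀, hs₀b⟩
    have hs₁Ioo : s₁ ∈ Set.Ioo a b := ⟨has₁, hs₁b⟩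
    have hs₀Icc : s₀ ∈ Set.Icc a b := hs₀M.1
    have hNs₀ : Set.Icc a b ∈ 𝓝 s₀ := Icc_mem_nhds has₀ hs₀b
    have hNs₁ : Set.Icc a b ∈ 𝓝 s₁ := Icc_mem_nhds has₁ hs₁b
    have hd₀ : HasDerivAt e θ' s₀ := by
      have hloc : IsLocalMin g s₀ := by
        filter_upwards [hNs₀] with x hx
        rw [hgs₀]; exact hmle x hx
      have hder : HasDerivAt g (deriv e s₀ - θ') s₀ := by
        rw [hgdef]
        have h := ((hediff s₀ hs₀Ioo).hasDerivAt.sub ((hasDerivAt_id s₀).const_mul θ') :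
          HasDerivAt (fun s => e s - θ' * id s) (deriv e s₀ - θ' * 1) s₀)
        simp only [id_eq, mul_one] at h; exact h
      have h0 := hloc.hasDerivAt_eq_zero hder
      have h1 : deriv e s₀ = θ' := by linarith only [h0]
      exact h1 ▸ (hediff s₀ hs₀Ioo).hasDerivAt
    have hd₁ : HasDerivAt e θ' s₁ := by
      have hloc : IsLocalMin g s₁ := by
        filter_upwards [hNs₁] with x hx
        rw [hgs₁]; exact hmle x hx
      have hder : HasDerivAt g (deriv e s₁ - θ') s₁ := by
        rw [hgdef]
        have h := ((hediff s₁ hs₁Ioo).hasDerivAt.sub ((hasDerivAt_id s₁).const_mul θ') :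
          HasDerivAt (fun s => e s - θ' * id s) (deriv e s₁ - θ' * 1) s₁)
        simp only [id_eq, mul_one] at h; exact h
      have h0 := hloc.hasDerivAt_eq_zero hder
      have h1 : deriv e s₁ = θ' := by linarith only [h0]
      exact h1 ▸ (hediff s₁ hs₁Ioo).hasDerivAt
    have hcont₀ : ContinuousAt e s₀ := hecont.continuousAt hNs₀
    have hcont₁ : ContinuousAt e s₁ := hecont.continuousAt hNs₁
    have hslope₀ : Tendsto (slope e s₀) (𝓝[<] s₀) (𝓝 θ') :=
      (hasDerivAt_iff_tendsto_slope.mp hd₀).mono_left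
        (nhdsWithin_mono _ (fun x hx => Set.mem_compl_singleton_iff.mpr (ne_of_lt hx)))
    have hslope₁ : Tendsto (slope e s₁) (𝓝[>] s₁) (𝓝 θ') :=
      (hasDerivAt_iff_tendsto_slope.mp hd₁).mono_left
        (nhdsWithin_mono _ (fun x hx => Set.mem_compl_singleton_iff.mpr (ne_of_gt hx)))
    -- selection of u
    have hUex : ∃ u, u ∈ Set.Ioo a s₀ ∧ θ' - δ < slope e s₀ u ∧ e u ≠ 0 := by
      have hTu : ∀ᶠ x in 𝓝[<] s₀, (θ' - δ < slope e s₀ x ∧ x ∈ Set.Ioo a s₀) := by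
        have h1 := hslope₀.eventually_const_lt (show θ' - δ < θ' by linarith only [hδpos])
        have h2 : ∀ᶠ x in 𝓝[<] s₀, x ∈ Set.Ioo a s₀ :=
          eventually_of_mem (Ioo_mem_nhdsLT_of_mem ⟨has₀, le_refl s₀⟩) (fun x hx => hx)
        exact h1.and h2
      obtain ⟨lu, hlu, hsubu⟩ := mem_nhdsLT_iff_exists_Ioo_subset.mp hTu
      have hlu' : lu < s₀ := hlu
      by_cases hEx : ∃ u ∈ Set.Ioo lu s₀, e u ≠ 0
      · obtain ⟨u, hu1, hu2⟩ := hEx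
        obtain ⟨hA, hB⟩ := hsubu hu1
        exact ⟨u, hB, hA, hu2⟩
      · exfalso
        push_neg at hEx
        have hIoo : Set.Ioo lu s₀ ∈ 𝓝[<] s₀ := Ioo_mem_nhdsLT_of_mem ⟨hlu, le_refl s₀⟩
        have hes₀ : e s₀ = 0 := by
          have ht1 : Tendsto e (𝓝[<] s₀) (𝓝 (e s₀)) :=
            (hcont₀ : Tendsto e (𝓝 s₀) (𝓝 (e s₀))).mono_left nhdsWithin_le_nhds
          have ht2 : Tendsto e (𝓝[<] s₀) (𝓝 0) := by
            refine Tendsto.congr' ?_ tendsto_const_nhds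
            filter_upwards [hIoo] with x hx using (hEx x hx).symm
          exact tendsto_nhds_unique ht1 ht2
        have hθ'0 : θ' = 0 := by
          have hW1 : HasDerivWithinAt e 0 (Set.Iio s₀) s₀ := by
            refine (hasDerivWithinAt_const s₀ _ (0:ℝ)).congr_of_eventuallyEq ?_ (by rw [hes₀])
            filter_upwards [hIoo] with x hx using hEx x hx
          have hW2 : HasDerivWithinAt e θ' (Set.Iio s₀) s₀ := hd₀.hasDerivWithinAt
          have e1 := hW1.derivWithin (uniqueDiffWithinAt_Iio s₀)
          have e2 := hW2.derivWithin (uniqueDiffWithinAt_Iio s₀)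
          rw [e1] at e2; exact e2.symm
        have hm0 : m = 0 := by
          rw [← hgs₀]; simp only [hgdef]; rw [hes₀, hθ'0]; ring
        set u₀ : ℝ := max ((lu + s₀)/2) ((a + s₀)/2) with hu₀def
        have hu₀lt : u₀ < s₀ := max_lt (by linarith only [hlu']) (by linarith only [has₀])
        have hu₀l : lu < u₀ := lt_of_lt_of_le (by linarith only [hlu']) (le_max_left _ _)
        have hu₀a : a < u₀ := lt_of_lt_of_le (by linarith only [has₀]) (le_max_right _ _)
        have hu₀M : u₀ ∈ M := by
          rw [hMdef]
          refine ⟨⟨hu₀a.le, le_trans hu₀lt.le hs₀Icc.2⟩, ?_⟩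
          have he0 : e u₀ = 0 := hEx u₀ ⟨hu₀l, hu₀lt⟩
          simp only [Set.mem_preimage, Set.mem_singleton_iff, hgdef]
          rw [he0, hθ'0, hm0]; ring
        have hle := csInf_le hMbddB hu₀M
        rw [← hs₀def] at hle
        linarith only [hle, hu₀lt]
    -- selection of v
    have hVex : ∃ v, v ∈ Set.Ioo s₁ b ∧ slope e s₁ v < θ' + δ ∧ e v ≠ 0 := by
      have hTv : ∀ᶠ x in 𝓝[>] s₁, (slope e s₁ x < θ' + δ ∧ x ∈ Set.Ioo s₁ b) := by
        have h1 := hslope₁.eventually_lt_const (show θ' < θ' + δ by linarith only [hδpos])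
        have h2 : ∀ᶠ x in 𝓝[>] s₁, x ∈ Set.Ioo s₁ b :=
          eventually_of_mem (Ioo_mem_nhdsGT_of_mem ⟨le_refl s₁, hs₁b⟩) (fun x hx => hx)
        exact h1.and h2
      obtain ⟨cv, hcv, hsubv⟩ := mem_nhdsGT_iff_exists_Ioo_subset.mp hTv
      have hcv' : s₁ < cv := hcv
      by_cases hEx : ∃ v ∈ Set.Ioo s₁ cv, e v ≠ 0
      · obtain ⟨v, hv1, hv2⟩ := hEx
        obtain ⟨hA, hB⟩ := hsubv hv1
        exact ⟨v, hB, hA, hv2⟩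
      · exfalso
        push_neg at hEx
        have hIoo : Set.Ioo s₁ cv ∈ 𝓝[>] s₁ := Ioo_mem_nhdsGT_of_mem ⟨le_refl s₁, hcv⟩
        have hes₁ : e s₁ = 0 := by
          have ht1 : Tendsto e (𝓝[>] s₁) (𝓝 (e s₁)) :=
            (hcont₁ : Tendsto e (𝓝 s₁) (𝓝 (e s₁))).mono_left nhdsWithin_le_nhds
          have ht2 : Tendsto e (𝓝[>] s₁) (𝓝 0) := by
            refine Tendsto.congr' ?_ tendsto_const_nhds
            filter_upwards [hIoo] with x hx using (hEx x hx).symm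
          exact tendsto_nhds_unique ht1 ht2
        have hθ'0 : θ' = 0 := by
          have hW1 : HasDerivWithinAt e 0 (Set.Ioi s₁) s₁ := by
            refine (hasDerivWithinAt_const s₁ _ (0:ℝ)).congr_of_eventuallyEq ?_ (by rw [hes₁])
            filter_upwards [hIoo] with x hx using hEx x hx
          have hW2 : HasDerivWithinAt e θ' (Set.Ioi s₁) s₁ := hd₁.hasDerivWithinAt
          have e1 := hW1.derivWithin (uniqueDiffWithinAt_Ioi s₁)
          have e2 := hW2.derivWithin (uniqueDiffWithinAt_Ioi s₁)
          rw [e1] at e2; exact e2.symm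
        have hm0 : m = 0 := by
          rw [← hgs₁]; simp only [hgdef]; rw [hes₁, hθ'0]; ring
        set v₀ : ℝ := (s₁ + cv)/2 with hv₀def
        have hv₀gt : s₁ < v₀ := by rw [hv₀def]; linarith only [hcv']
        have hv₀lt : v₀ < cv := by rw [hv₀def]; linarith only [hcv']
        have hv₀Ioo : v₀ ∈ Set.Ioo s₁ b := (hsubv ⟨hv₀gt, hv₀lt⟩).2
        have hv₀M : v₀ ∈ M := by
          rw [hMdef]
          refine ⟨⟨le_trans hs₁M.1.1 hv₀gt.le, hv₀Ioo.2.le⟩, ?_⟩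
          have he0 : e v₀ = 0 := hEx v₀ ⟨hv₀gt, hv₀lt⟩
          simp only [Set.mem_preimage, Set.mem_singleton_iff, hgdef]
          rw [he0, hθ'0, hm0]; ring
        have hle := le_csSup hMbddA hv₀M
        rw [← hs₁def] at hle
        linarith only [hle, hv₀gt]
    obtain ⟨u, huIoo, huslope, hune⟩ := hUex
    obtain ⟨v, hvIoo, hvslope, hvne⟩ := hVex
    have huIcc : u ∈ Set.Icc a b := ⟨huIoo.1.le, le_trans huIoo.2.le hs₀Icc.2⟩
    have hvIcc : v ∈ Set.Icc a b := ⟨le_trans hs₁M.1.1 hvIoo.1.le, hvIoo.2.le⟩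
    have hus₀ : u < s₀ := huIoo.2
    have hs₀v : s₀ < v := lt_of_le_of_lt hs₀s₁ hvIoo.1
    set β : ℝ := θ' - δ with hβdef
    set γ : ℝ := θ' + δ with hγdef
    have hθβ : θ < β := by rw [hβdef, hθ'def, hδdef]; linarith only [hκpos]
    set r₀ : ℝ := e s₀ with hr₀def
    set r₁ : ℝ := (s₀ - u) * β + e u with hr₁def
    set r₂ : ℝ := (s₀ - v) * γ + e v with hr₂def
    have hr₁lt : r₁ < r₀ := by
      rw [slope_def_field] at huslope
      have hneg : u - s₀ < 0 := by linarith only [hus₀]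
      have h2 : e u - e s₀ < β * (u - s₀) := by
        have h3 := mul_lt_mul_of_neg_right huslope hneg
        rwa [div_mul_cancel₀ _ (ne_of_lt hneg)] at h3
      have hx : (s₀ - u) * β = -(β * (u - s₀)) := by ring
      rw [hr₁def, hr₀def]
      linarith only [h2, hx]
    have hr₂lt : r₂ < r₀ := by
      rw [slope_def_field] at hvslope
      have hvgt : s₁ < v := hvIoo.1
      have hpos : 0 < v - s₁ := by linarith only [hvgt]
      have h2 : e v - e s₁ < γ * (v - s₁) := by
        have h3 := mul_lt_mul_of_pos_right hvslope hpos
        rwa [div_mul_cancel₀ _ (ne_of_gt hpos)] at h3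
      have he₁ : e s₁ - θ' * s₁ = e s₀ - θ' * s₀ := by
        have h4 : g s₁ = g s₀ := hgs₁.trans hgs₀.symm
        simpa only [hgdef] using h4
      have hδs : 0 ≤ δ * (s₁ - s₀) := mul_nonneg hδpos.le (by linarith only [hs₀s₁])
      have hx1 : (s₀ - v) * γ + γ * (v - s₁) = γ * (s₀ - s₁) := by ring
      have hx2 : γ * (s₀ - s₁) = θ' * s₀ - θ' * s₁ - δ * (s₁ - s₀) := by rw [hγdef]; ring
      rw [hr₂def, hr₀def]
      linarith only [h2, he₁, hδs, hx1, hx2]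
    set ρ : ℝ := max r₁ r₂ with hρdef
    have hρlt : ρ < r₀ := by rw [hρdef]; exact max_lt hr₁lt hr₂lt
    have hρ1 : r₁ ≤ ρ := by rw [hρdef]; exact le_max_left _ _
    have hρ2 : r₂ ≤ ρ := by rw [hρdef]; exact le_max_right _ _
    set ε₀ : ℝ := min ((r₀ - ρ)/4) (ε/8) with hε₀def
    have hε₀pos : 0 < ε₀ := lt_min (by linarith only [hρlt]) (by linarith only [hε])
    have hε₀a : ε₀ ≤ (r₀ - ρ)/4 := min_le_left _ _
    have hε₀b : ε₀ ≤ ε/8 := min_le_right _ _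
    set Cm : ℝ := max (s₀ * β) (s₀ * γ) with hCmdef
    -- honesty
    have hjunk : ∀ s ∈ Set.Icc a b, e s ≠ 0 → ∀ᶠ t in atTop,
        ¬((∫⁻ x, ENNReal.ofReal (Real.exp (s * X t x)) ∂ (P t)) = ⊤ ∨
          (∫⁻ x, ENNReal.ofReal (Real.exp (s * X t x)) ∂ (P t)) = 0) := by
      intro s hs hne
      refine freq_zero_aux hne (he s hs) ?_
      intro t ht
      rcases ht with h | h <;> simp [h]
    have hmeasf : ∀ t (s : ℝ), Measurable fun x => ENNReal.ofReal (Real.exp (s * X t x)) :=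
      fun t s => (Real.measurable_exp.comp ((hX t).const_mul s)).ennreal_ofReal
    have hzero_imp : ∀ t, (∫⁻ x, ENNReal.ofReal (Real.exp (u * X t x)) ∂ (P t)) ≠ 0 →
        (∫⁻ x, ENNReal.ofReal (Real.exp (s₀ * X t x)) ∂ (P t)) ≠ 0 := by
      intro t h h0
      apply h
      have haeq := (lintegral_eq_zero_iff (hmeasf t s₀)).mp h0
      have hFalse : ∀ᵐ x ∂ (P t), False := by
        filter_upwards [haeq] with x hx
        simp only [Pi.zero_apply, ENNReal.ofReal_eq_zero] at hx
        exact absurd hx (not_le.mpr (Real.exp_pos _))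
      have hbot : MeasureTheory.ae (P t) = ⊥ := eventually_false_iff_eq_bot.mp hFalse
      have hμ0 : P t = 0 := ae_eq_bot.mp hbot
      rw [hμ0]
      simp
    have hW0 : ∀ᶠ t in atTop,
        Real.log 4 / (2*ε₀) ≤ w t ∧ Real.log 2 / ε₀ ≤ w t :=
      (hwtop.eventually_ge_atTop _).and (hwtop.eventually_ge_atTop _)
    filter_upwards [hjunk u huIcc hune, hjunk v hvIcc hvne,
      (he u huIcc).eventually_lt_const (lt_add_of_pos_right _ hε₀pos),
      (he v hvIcc).eventually_lt_const (lt_add_of_pos_right _ hε₀pos),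
      (he s₀ hs₀Icc).eventually_const_lt (sub_lt_self _ hε₀pos),
      hW0] with t hju hjv hFu hFv hFs hWb
    obtain ⟨hw1, hw2⟩ := hWb
    push_neg at hju hjv
    obtain ⟨huT, hu0⟩ := hju
    obtain ⟨hvT, hv0⟩ := hjv
    have hWpos := hw t
    -- upper bounds on Z at u, v
    have hposu : 0 < ((∫⁻ x, ENNReal.ofReal (Real.exp (u * X t x)) ∂ (P t))).toReal :=
      ENNReal.toReal_pos hu0 huT
    have hZu : (∫⁻ x, ENNReal.ofReal (Real.exp (u * X t x)) ∂ (P t)) ≤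
        ENNReal.ofReal (Real.exp ((e u + ε₀) * w t)) := by
      have hlogu := (div_lt_iff₀ hWpos).mp hFu
      rw [← ENNReal.ofReal_toReal huT]
      exact ENNReal.ofReal_le_ofReal ((Real.log_lt_iff_lt_exp hposu).mp hlogu).le
    have hposv : 0 < ((∫⁻ x, ENNReal.ofReal (Real.exp (v * X t x)) ∂ (P t))).toReal :=
      ENNReal.toReal_pos hv0 hvT
    have hZv : (∫⁻ x, ENNReal.ofReal (Real.exp (v * X t x)) ∂ (P t)) ≤
        ENNReal.ofReal (Real.exp ((e v + ε₀) * w t)) := by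
      have hlogv := (div_lt_iff₀ hWpos).mp hFv
      rw [← ENNReal.ofReal_toReal hvT]
      exact ENNReal.ofReal_le_ofReal ((Real.log_lt_iff_lt_exp hposv).mp hlogv).le
    -- lower bound on Z at s₀
    have hZs : ENNReal.ofReal (Real.exp ((r₀ - ε₀) * w t)) ≤
        (∫⁻ x, ENNReal.ofReal (Real.exp (s₀ * X t x)) ∂ (P t)) := by
      rcases eq_or_ne (∫⁻ x, ENNReal.ofReal (Real.exp (s₀ * X t x)) ∂ (P t)) ⊤ with hsT | hsT
      · rw [hsT]; exact le_top
      · have hs0 := hzero_imp t hu0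
        have hposs : 0 < ((∫⁻ x, ENNReal.ofReal (Real.exp (s₀ * X t x)) ∂ (P t))).toReal :=
          ENNReal.toReal_pos hs0 hsT
        have hlogs := (lt_div_iff₀ hWpos).mp hFs
        rw [← ENNReal.ofReal_toReal hsT]
        exact ENNReal.ofReal_le_ofReal ((Real.lt_log_iff_exp_lt hposs).mp hlogs).le
    -- split inequality
    have hsplit := split_bound (P t) (X t) (hX t) s₀ u v (w t) β γ hus₀.le hs₀v.le hWpos.le
    rw [← hCmdef] at hsplit
    have hevmono : (P t) {x | β * w t < X t x} ≤ (P t) {x | θ * w t < X t x} :=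
      measure_mono (fun x hx => lt_trans (mul_lt_mul_of_pos_right hθβ hWpos) hx)
    set S : ENNReal := (P t) {x | θ * w t < X t x} with hSdef
    have hchain : ENNReal.ofReal (Real.exp ((r₀ - ε₀) * w t)) ≤
        ENNReal.ofReal (Real.exp ((r₁ + ε₀) * w t)) + ENNReal.ofReal (Real.exp ((r₂ + ε₀) * w t))
        + ENNReal.ofReal (Real.exp (Cm * w t)) * S := by
      refine le_trans hZs (le_trans hsplit ?_)
      have h1 : ENNReal.ofReal (Real.exp ((s₀ - u) * (β * w t))) *
          (∫⁻ x, ENNReal.ofReal (Real.exp (u * X t x)) ∂ (P t)) ≤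
          ENNReal.ofReal (Real.exp ((r₁ + ε₀) * w t)) := by
        calc ENNReal.ofReal (Real.exp ((s₀ - u) * (β * w t))) *
            (∫⁻ x, ENNReal.ofReal (Real.exp (u * X t x)) ∂ (P t))
            ≤ ENNReal.ofReal (Real.exp ((s₀ - u) * (β * w t))) *
              ENNReal.ofReal (Real.exp ((e u + ε₀) * w t)) := mul_le_mul_right hZu _
          _ = ENNReal.ofReal (Real.exp ((s₀ - u) * (β * w t)) * Real.exp ((e u + ε₀) * w t)) :=
              (ENNReal.ofReal_mul (Real.exp_nonneg _)).symm
          _ = ENNReal.ofReal (Real.exp ((r₁ + ε₀) * w t)) := by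
              rw [← Real.exp_add]
              congr 2
              rw [hr₁def]; ring
      have h2 : ENNReal.ofReal (Real.exp ((s₀ - v) * (γ * w t))) *
          (∫⁻ x, ENNReal.ofReal (Real.exp (v * X t x)) ∂ (P t)) ≤
          ENNReal.ofReal (Real.exp ((r₂ + ε₀) * w t)) := by
        calc ENNReal.ofReal (Real.exp ((s₀ - v) * (γ * w t))) *
            (∫⁻ x, ENNReal.ofReal (Real.exp (v * X t x)) ∂ (P t))
            ≤ ENNReal.ofReal (Real.exp ((s₀ - v) * (γ * w t))) *
              ENNReal.ofReal (Real.exp ((e v + ε₀) * w t)) := mul_le_mul_right hZv _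
          _ = ENNReal.ofReal (Real.exp ((s₀ - v) * (γ * w t)) * Real.exp ((e v + ε₀) * w t)) :=
              (ENNReal.ofReal_mul (Real.exp_nonneg _)).symm
          _ = ENNReal.ofReal (Real.exp ((r₂ + ε₀) * w t)) := by
              rw [← Real.exp_add]
              congr 2
              rw [hr₂def]; ring
      have h3 : ENNReal.ofReal (Real.exp (Cm * w t)) * (P t) {x | β * w t < X t x} ≤
          ENNReal.ofReal (Real.exp (Cm * w t)) * S := mul_le_mul_right hevmono _
      exact add_le_add (add_le_add h1 h2) h3
    -- real comparison
    have hKX : 2 * Real.exp ((ρ + ε₀) * w t) + (1/2) * Real.exp ((r₀ - ε₀) * w t) ≤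
        Real.exp ((r₀ - ε₀) * w t) := by
      have h4 : (4:ℝ) ≤ Real.exp (2*ε₀ * w t) := by
        rw [← Real.exp_log (by norm_num : (0:ℝ) < 4)]
        refine Real.exp_le_exp.mpr ?_
        have hh : Real.log 4 = (Real.log 4 / (2*ε₀)) * (2*ε₀) :=
          (div_mul_cancel₀ _ (by positivity : (0:ℝ) < 2*ε₀).ne').symm
        rw [hh]
        calc (Real.log 4 / (2*ε₀)) * (2*ε₀) ≤ w t * (2*ε₀) :=
              mul_le_mul_of_nonneg_right hw1 (by positivity)
          _ = 2*ε₀*w t := by ring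
      have h5 : Real.exp ((ρ + ε₀) * w t) * Real.exp (2*ε₀ * w t) ≤
          Real.exp ((r₀ - ε₀) * w t) := by
        rw [← Real.exp_add]
        refine Real.exp_le_exp.mpr ?_
        have hexp1 : ρ + ε₀ + 2*ε₀ ≤ r₀ - ε₀ := by linarith only [hε₀a]
        have hexp2 := mul_le_mul_of_nonneg_right hexp1 hWpos.le
        have hexp3 : (ρ + ε₀ + 2*ε₀) * w t = (ρ + ε₀) * w t + 2*ε₀ * w t := by ring
        linarith only [hexp2, hexp3]
      have h6 := mul_le_mul_of_nonneg_left h4 (Real.exp_pos ((ρ + ε₀) * w t)).le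
      linarith only [h5, h6]
    have hcancel : ENNReal.ofReal ((1/2) * Real.exp ((r₀ - ε₀) * w t)) ≤
        ENNReal.ofReal (Real.exp (Cm * w t)) * S := by
      have hsum : ENNReal.ofReal (Real.exp ((r₁ + ε₀) * w t)) +
          ENNReal.ofReal (Real.exp ((r₂ + ε₀) * w t)) ≤
          ENNReal.ofReal (2 * Real.exp ((ρ + ε₀) * w t)) := by
        rw [← ENNReal.ofReal_add (Real.exp_nonneg _) (Real.exp_nonneg _)]
        refine ENNReal.ofReal_le_ofReal ?_
        have e1 : Real.exp ((r₁ + ε₀) * w t) ≤ Real.exp ((ρ + ε₀) * w t) :=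
          Real.exp_le_exp.mpr (mul_le_mul_of_nonneg_right (by linarith only [hρ1]) hWpos.le)
        have e2 : Real.exp ((r₂ + ε₀) * w t) ≤ Real.exp ((ρ + ε₀) * w t) :=
          Real.exp_le_exp.mpr (mul_le_mul_of_nonneg_right (by linarith only [hρ2]) hWpos.le)
        linarith only [e1, e2]
      have hchain2 : ENNReal.ofReal (Real.exp ((r₀ - ε₀) * w t)) ≤
          ENNReal.ofReal (2 * Real.exp ((ρ + ε₀) * w t)) +
          ENNReal.ofReal (Real.exp (Cm * w t)) * S :=
        hchain.trans (add_le_add_left hsum _)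
      have hsplit2 : ENNReal.ofReal (2 * Real.exp ((ρ + ε₀) * w t)) +
          ENNReal.ofReal ((1/2) * Real.exp ((r₀ - ε₀) * w t)) ≤
          ENNReal.ofReal (2 * Real.exp ((ρ + ε₀) * w t)) +
          ENNReal.ofReal (Real.exp (Cm * w t)) * S := by
        refine le_trans ?_ hchain2
        rw [← ENNReal.ofReal_add (by positivity) (by positivity)]
        exact ENNReal.ofReal_le_ofReal hKX
      exact (ENNReal.add_le_add_iff_left ENNReal.ofReal_ne_top).mp hsplit2
    have hc₃0 : ENNReal.ofReal (Real.exp (Cm * w t)) ≠ 0 :=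
      ne_of_gt (ENNReal.ofReal_pos.mpr (Real.exp_pos _))
    have hμS : ENNReal.ofReal ((1/2) * Real.exp ((r₀ - ε₀ - Cm) * w t)) ≤ S := by
      rw [← ENNReal.mul_le_mul_iff_left hc₃0 ENNReal.ofReal_ne_top]
      have harg : (r₀ - ε₀ - Cm) * w t + Cm * w t = (r₀ - ε₀) * w t := by ring
      calc ENNReal.ofReal ((1/2) * Real.exp ((r₀ - ε₀ - Cm) * w t)) *
          ENNReal.ofReal (Real.exp (Cm * w t))
          = ENNReal.ofReal ((1/2) * Real.exp ((r₀ - ε₀ - Cm) * w t) * Real.exp (Cm * w t)) :=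
            (ENNReal.ofReal_mul (by positivity)).symm
        _ = ENNReal.ofReal ((1/2) * Real.exp ((r₀ - ε₀) * w t)) := by
            rw [mul_assoc, ← Real.exp_add, harg]
        _ ≤ ENNReal.ofReal (Real.exp (Cm * w t)) * S := hcancel
        _ = S * ENNReal.ofReal (Real.exp (Cm * w t)) := mul_comm _ _
    haveI := hP t
    have hSne : S ≠ ⊤ := (measure_lt_top (P t) _).ne
    have hYle : (1/2) * Real.exp ((r₀ - ε₀ - Cm) * w t) ≤ S.toReal :=
      (ENNReal.ofReal_le_iff_le_toReal hSne).mp hμS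
    have hYpos : (0:ℝ) < (1/2) * Real.exp ((r₀ - ε₀ - Cm) * w t) := by positivity
    have hlogS : (r₀ - ε₀ - Cm) * w t - Real.log 2 ≤ Real.log (S.toReal) := by
      have hlog1 : Real.log ((1/2) * Real.exp ((r₀ - ε₀ - Cm) * w t)) =
          (r₀ - ε₀ - Cm) * w t - Real.log 2 := by
        rw [Real.log_mul (by norm_num) (Real.exp_ne_zero _), Real.log_exp]
        rw [show (1/2 : ℝ) = 2⁻¹ by norm_num, Real.log_inv]
        ring
      rw [← hlog1]
      exact Real.log_le_log hYpos hYle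
    have hdiv : ((r₀ - ε₀ - Cm) * w t - Real.log 2) / w t ≤ Real.log (S.toReal) / w t :=
      (div_le_div_iff_of_pos_right hWpos).mpr hlogS
    have hsimpl : r₀ - Cm - 2*ε₀ ≤ ((r₀ - ε₀ - Cm) * w t - Real.log 2) / w t := by
      have h1 : ((r₀ - ε₀ - Cm) * w t) / w t = r₀ - ε₀ - Cm :=
        mul_div_cancel_right₀ _ hWpos.ne'
      have h2 : Real.log 2 / w t ≤ ε₀ := by
        rw [div_le_iff₀ hWpos]
        have hh : Real.log 2 = (Real.log 2 / ε₀) * ε₀ :=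
          (div_mul_cancel₀ _ hε₀pos.ne').symm
        rw [hh]
        calc (Real.log 2 / ε₀) * ε₀ ≤ w t * ε₀ :=
            mul_le_mul_of_nonneg_right hw2 hε₀pos.le
          _ = ε₀ * w t := by ring
      rw [sub_div, h1]
      linarith only [h2]
    -- final arithmetic
    have hφs₀ : θ * s₀ - e s₀ ≤ flt a b e θ := hφ_ge s₀ hs₀Icc
    have habs : |s₀| ≤ Kb := by
      have k1 : |a| ≤ Kb := by rw [hKbdef]; exact le_max_left _ _
      have k2 : |b| ≤ Kb := by rw [hKbdef]; exact le_max_right _ _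
      refine abs_le.mpr ⟨?_, ?_⟩
      · linarith only [neg_abs_le a, hs₀Icc.1, k1]
      · linarith only [le_abs_self b, hs₀Icc.2, k2]
    have hCmle : Cm ≤ θ' * s₀ + |s₀| * δ := by
      rw [hCmdef]
      refine max_le ?_ ?_
      · have k1 := mul_le_mul_of_nonneg_right (neg_le_abs s₀) hδpos.le
        have k2 : s₀ * β = θ' * s₀ - s₀ * δ := by rw [hβdef]; ring
        have k3 : -s₀ * δ = -(s₀ * δ) := by ring
        linarith only [k1, k2, k3]
      · have k1 := mul_le_mul_of_nonneg_right (le_abs_self s₀) hδpos.le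
        have k2 : s₀ * γ = θ' * s₀ + s₀ * δ := by rw [hγdef]; ring
        linarith only [k1, k2]
    have hfinal : -(flt a b e θ) - ε ≤ r₀ - Cm - 2*ε₀ := by
      have h1 : θ' * s₀ = θ * s₀ + κ * s₀ := by rw [hθ'def]; ring
      have h2 : κ * s₀ ≤ κ * |s₀| := mul_le_mul_of_nonneg_left (le_abs_self s₀) hκpos.le
      have h3 : |s₀| * δ = (κ * |s₀|)/2 := by rw [hδdef]; ring
      have h4 : κ * |s₀| ≤ (ε / (2*(Kb+1))) * Kb :=
        mul_le_mul hκle habs (abs_nonneg _) (by positivity)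
      have h5 : (ε / (2*(Kb+1))) * Kb ≤ ε/2 := by
        rw [div_mul_eq_mul_div, div_le_div_iff₀ (by positivity) (by norm_num)]
        have hx : ε * (2*(Kb+1)) = ε * Kb * 2 + 2 * ε := by ring
        linarith only [hx, hε]
      have h6 : 2*ε₀ ≤ ε/4 := by linarith only [hε₀b]
      have h7 : κ * |s₀| ≤ ε/2 := h4.trans h5
      have h8 : -(flt a b e θ) ≤ r₀ - θ * s₀ := by rw [hr₀def]; linarith only [hφs₀]
      linarith only [hCmle, h1, h2, h3, h7, h6, h8]
    calc -(flt a b e θ) - ε ≤ r₀ - Cm - 2*ε₀ := hfinal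
      _ ≤ ((r₀ - ε₀ - Cm) * w t - Real.log 2) / w t := hsimpl
      _ ≤ Real.log (S.toReal) / w t := hdiv
  -- conclusion
  refine le_of_not_gt fun hlt => ?_
  obtain ⟨c, hc1, hc2⟩ := EReal.exists_between_coe_real hlt
  have hc2' : c < -(flt a b e θ) := by exact_mod_cast hc2
  have hev := main (-(flt a b e θ) - c) (by linarith only [hc2'])
  have hle : (c : EReal) ≤ Filter.liminf
      (fun t => ((Real.log ((P t {x | θ * w t < X t x}).toReal) / w t : ℝ) : EReal)) atTop := by
    refine le_liminf_of_le (by isBoundedDefault) ?_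
    filter_upwards [hev] with t ht
    have hct : c ≤ Real.log ((P t {x | θ * w t < X t x}).toReal) / w t := by linarith only [ht]
    exact_mod_cast hct
  exact absurd hle (not_le.mpr hc1)
end

section
/- Under assumption (LD), if e is differentiable on (a,b) and 0 ∈ (a,b), then for every open set J ⊂ (D⁺e(a), D⁻e(b)), lim_t (1/w_t) log P_t({x : w_t^{-1} X_t(x) ∈ J}) = − inf_{θ∈J} φ(θ) (local Gärtner–Ellis theorem). -/
open Filter MeasureTheory

open Set
open scoped ENNReal

namespace GE

/-! ### Generic integral lemmas -/

variable {α : Type*} [MeasurableSpace α]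

noncomputable def Zf (μ : Measure α) (f : α → ℝ) (s : ℝ) : ℝ≥0∞ :=
  ∫⁻ x, ENNReal.ofReal (Real.exp (s * f x)) ∂ μ

lemma Zf_def (μ : Measure α) (f : α → ℝ) (s : ℝ) :
    Zf μ f s = ∫⁻ x, ENNReal.ofReal (Real.exp (s * f x)) ∂ μ := rfl

lemma measZ (s : ℝ) {f : α → ℝ} (hf : Measurable f) :
    Measurable fun x => ENNReal.ofReal (Real.exp (s * f x)) :=
  ENNReal.measurable_ofReal.comp (Real.measurable_exp.comp (hf.const_mul s))

lemma Zf_zero (μ : Measure α) (f : α → ℝ) : Zf μ f 0 = μ univ := by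
  simp [Zf]

lemma Zf_le (μ : Measure α) (f : α → ℝ) {s σ c : ℝ} (h0 : 0 ≤ c) (h1 : c ≤ 1)
    (hc : σ = c * s) : Zf μ f σ ≤ μ univ + Zf μ f s := by
  have hpt : ∀ x, ENNReal.ofReal (Real.exp (σ * f x)) ≤
      ENNReal.ofReal (1 + Real.exp (s * f x)) := by
    intro x
    apply ENNReal.ofReal_le_ofReal
    have h2 : σ * f x ≤ max 0 (s * f x) := by
      rcases le_or_gt 0 (s * f x) with h | h
      · have h3 : c * (s * f x) ≤ 1 * (s * f x) := mul_le_mul_of_nonneg_right h1 h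
        calc σ * f x = c * (s * f x) := by rw [hc]; ring
          _ ≤ 1 * (s * f x) := h3
          _ = s * f x := one_mul _
          _ ≤ max 0 (s * f x) := le_max_right _ _
      · have h3 : c * (s * f x) ≤ 0 := mul_nonpos_of_nonneg_of_nonpos h0 h.le
        calc σ * f x = c * (s * f x) := by rw [hc]; ring
          _ ≤ 0 := h3
          _ ≤ max 0 (s * f x) := le_max_left _ _
    calc Real.exp (σ * f x) ≤ Real.exp (max 0 (s * f x)) := Real.exp_le_exp.2 h2
      _ ≤ 1 + Real.exp (s * f x) := by
          rcases max_cases 0 (s * f x) with ⟨h', _⟩ | ⟨h', _⟩ <;> rw [h']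
          · simpa using (Real.exp_nonneg (s * f x))
          · have := Real.exp_pos (s * f x); linarith
  calc Zf μ f σ ≤ ∫⁻ x, ENNReal.ofReal (1 + Real.exp (s * f x)) ∂ μ := lintegral_mono hpt
    _ = ∫⁻ x, (1 + ENNReal.ofReal (Real.exp (s * f x))) ∂ μ := by
        congr 1; funext x
        rw [ENNReal.ofReal_add zero_le_one (Real.exp_nonneg _), ENNReal.ofReal_one]
    _ = μ univ + Zf μ f s := by
        rw [lintegral_add_left measurable_const, lintegral_one]; rfl

lemma Zf_ne_zero {μ : Measure α} {f : α → ℝ} (hf : Measurable f) (hμ : μ ≠ 0) (s : ℝ) :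
    Zf μ f s ≠ 0 := by
  intro h
  rw [Zf, lintegral_eq_zero_iff (measZ s hf)] at h
  apply hμ
  rw [← Measure.measure_univ_eq_zero]
  have h2 : μ {x | ¬ (ENNReal.ofReal (Real.exp (s * f x)) = 0)} = 0 := by
    simpa [Filter.EventuallyEq, ae_iff] using h
  convert h2 using 2
  ext x
  simp [ENNReal.ofReal_eq_zero, not_le, Real.exp_pos]

lemma chern {μ : Measure α} {f : α → ℝ} (hf : Measurable f) {s c : ℝ} {S : Set α}
    (h : ∀ x ∈ S, c ≤ s * f x) :
    μ S * ENNReal.ofReal (Real.exp c) ≤ Zf μ f s := by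
  calc μ S * ENNReal.ofReal (Real.exp c)
      = ∫⁻ _ in S, ENNReal.ofReal (Real.exp c) ∂ μ := by rw [setLIntegral_const, mul_comm]
    _ ≤ ∫⁻ x in S, ENNReal.ofReal (Real.exp (s * f x)) ∂ μ :=
        setLIntegral_mono (measZ s hf) fun x hx =>
          ENNReal.ofReal_le_ofReal (Real.exp_le_exp.2 (h x hx))
    _ ≤ Zf μ f s := setLIntegral_le_lintegral _ _

lemma tilt {μ : Measure α} {f : α → ℝ} (hf : Measurable f) {s s' d : ℝ} {S : Set α}
    (h : ∀ x ∈ S, s * f x ≤ s' * f x + d) :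
    ∫⁻ x in S, ENNReal.ofReal (Real.exp (s * f x)) ∂ μ ≤
      ENNReal.ofReal (Real.exp d) * Zf μ f s' := by
  calc ∫⁻ x in S, ENNReal.ofReal (Real.exp (s * f x)) ∂ μ
      ≤ ∫⁻ x in S, ENNReal.ofReal (Real.exp d) * ENNReal.ofReal (Real.exp (s' * f x)) ∂ μ := by
        apply setLIntegral_mono (measurable_const.mul (measZ s' hf))
        intro x hx
        show _ ≤ ENNReal.ofReal (Real.exp d) * ENNReal.ofReal (Real.exp (s' * f x))
        rw [← ENNReal.ofReal_mul (Real.exp_nonneg _), ← Real.exp_add]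
        exact ENNReal.ofReal_le_ofReal (Real.exp_le_exp.2 (by linarith [h x hx]))
    _ = ENNReal.ofReal (Real.exp d) * ∫⁻ x in S, ENNReal.ofReal (Real.exp (s' * f x)) ∂ μ :=
        lintegral_const_mul _ (measZ s' hf)
    _ ≤ ENNReal.ofReal (Real.exp d) * Zf μ f s' :=
        mul_le_mul_right (setLIntegral_le_lintegral _ _) _

lemma cancel_upper {m : ℝ≥0∞} {c d : ℝ}
    (h : m * ENNReal.ofReal (Real.exp c) ≤ ENNReal.ofReal (Real.exp d)) :
    m ≤ ENNReal.ofReal (Real.exp (d - c)) := by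
  have h1 : m ≤ ENNReal.ofReal (Real.exp d) / ENNReal.ofReal (Real.exp c) := by
    rw [ENNReal.le_div_iff_mul_le (Or.inl (by simp [Real.exp_pos])) (Or.inl ENNReal.ofReal_ne_top)]
    exact h
  calc m ≤ ENNReal.ofReal (Real.exp d) / ENNReal.ofReal (Real.exp c) := h1
    _ = ENNReal.ofReal (Real.exp d / Real.exp c) := (ENNReal.ofReal_div_of_pos (Real.exp_pos c)).symm
    _ = ENNReal.ofReal (Real.exp (d - c)) := by rw [Real.exp_sub]

lemma cancel_lower {m : ℝ≥0∞} {c d : ℝ}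
    (h : ENNReal.ofReal (Real.exp d) ≤ m * ENNReal.ofReal (Real.exp c)) :
    ENNReal.ofReal (Real.exp (d - c)) ≤ m := by
  have h1 : ENNReal.ofReal (Real.exp d) / ENNReal.ofReal (Real.exp c) ≤ m := by
    rw [ENNReal.div_le_iff_le_mul (Or.inl (by simp [Real.exp_pos]))
      (Or.inl ENNReal.ofReal_ne_top)]
    exact h
  calc ENNReal.ofReal (Real.exp (d - c))
      = ENNReal.ofReal (Real.exp d / Real.exp c) := by rw [Real.exp_sub]
    _ = ENNReal.ofReal (Real.exp d) / ENNReal.ofReal (Real.exp c) :=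
        ENNReal.ofReal_div_of_pos (Real.exp_pos c)
    _ ≤ m := h1

/-! ### Legendre transform lemmas -/

variable {a b : ℝ} {e : ℝ → ℝ}

lemma flt_ge (hab : a ≤ b) (hecont : ContinuousOn e (Icc a b)) {s : ℝ} (hs : s ∈ Icc a b)
    (θ : ℝ) : θ * s - e s ≤ flt a b e θ := by
  apply le_csSup
  · exact (isCompact_Icc.image_of_continuousOn
      (((continuous_const.mul continuous_id).continuousOn).sub hecont)).bddAbove
  · exact ⟨s, hs, rfl⟩

lemma flt_eq {θ s : ℝ} (hs : s ∈ Icc a b)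
    (hmin : IsMinOn (fun s' => e s' - θ * s') (Icc a b) s) :
    flt a b e θ = θ * s - e s := by
  apply IsGreatest.csSup_eq
  constructor
  · exact ⟨s, hs, rfl⟩
  · rintro y ⟨s', hs', rfl⟩
    have := isMinOn_iff.1 hmin s' hs'
    simp only [id] at this ⊢
    linarith

lemma flt_min (hab : a ≤ b) (hecont : ContinuousOn e (Icc a b)) (θ : ℝ) :
    ∃ s ∈ Icc a b, IsMinOn (fun s' => e s' - θ * s') (Icc a b) s ∧
      flt a b e θ = θ * s - e s := by
  obtain ⟨s, hs, hmin⟩ := isCompact_Icc.exists_isMinOn (nonempty_Icc.2 hab)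
    (hecont.sub ((continuous_const.mul continuous_id).continuousOn))
  exact ⟨s, hs, hmin, flt_eq hs hmin⟩

lemma flt_lip (hab : a ≤ b) (hecont : ContinuousOn e (Icc a b)) (θ₁ θ₂ : ℝ) :
    flt a b e θ₁ - flt a b e θ₂ ≤ max |a| |b| * |θ₁ - θ₂| := by
  obtain ⟨s, hs, _, hval⟩ := flt_min hab hecont θ₁
  have hsle : |s| ≤ max |a| |b| := by
    apply abs_le.2
    constructor
    · calc -(max |a| |b|) ≤ -|a| := by simp
        _ ≤ a := neg_abs_le a
        _ ≤ s := hs.1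
    · calc s ≤ b := hs.2
        _ ≤ |b| := le_abs_self b
        _ ≤ max |a| |b| := le_max_right _ _
  have h2 : θ₂ * s - e s ≤ flt a b e θ₂ := flt_ge hab hecont hs θ₂
  have h3 : flt a b e θ₁ = θ₂ * s - e s + (θ₁ - θ₂) * s := by rw [hval]; ring
  have habs : (θ₁ - θ₂) * s ≤ max |a| |b| * |θ₁ - θ₂| := by
    calc (θ₁ - θ₂) * s ≤ |(θ₁ - θ₂) * s| := le_abs_self _
      _ = |θ₁ - θ₂| * |s| := abs_mul _ _
      _ ≤ |θ₁ - θ₂| * max |a| |b| := mul_le_mul_of_nonneg_left hsle (abs_nonneg _)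
      _ = max |a| |b| * |θ₁ - θ₂| := mul_comm _ _
  linarith

lemma flt_cont (hab : a ≤ b) (hecont : ContinuousOn e (Icc a b)) :
    Continuous (flt a b e) := by
  have hM : 0 ≤ max |a| |b| := le_trans (abs_nonneg a) (le_max_left _ _)
  apply LipschitzWith.continuous (K := Real.toNNReal (max |a| |b|))
  apply LipschitzWith.of_dist_le_mul
  intro x y
  rw [Real.dist_eq, Real.dist_eq, Real.coe_toNNReal _ hM]
  apply abs_sub_le_iff.2
  exact ⟨flt_lip hab hecont x y, by
    have := flt_lip hab hecont y x
    rwa [abs_sub_comm] at this⟩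

/-! ### One-sided derivative lemmas -/

lemma deriv_eq_zero_right {c b d : ℝ} {e : ℝ → ℝ} (hcb : c < b)
    (h0 : ∀ s ∈ Icc c b, e s = 0) (hd : HasDerivWithinAt e d (Ici c) c) : d = 0 := by
  have hmem : Icc c b ∈ nhdsWithin c (Ici c) := by
    rw [← Ici_inter_Iic]
    exact inter_mem_nhdsWithin _ (Iic_mem_nhds hcb)
  have heq : (fun _ => (0:ℝ)) =ᶠ[nhdsWithin c (Ici c)] e := by
    filter_upwards [hmem] with s hs
    exact (h0 s hs).symm
  have hd0 : HasDerivWithinAt (fun _ => (0:ℝ)) d (Ici c) c :=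
    hd.congr_of_eventuallyEq heq (h0 c (left_mem_Icc.2 hcb.le)).symm
  have h2 : HasDerivWithinAt (fun _ => (0:ℝ)) 0 (Ici c) c := hasDerivWithinAt_const c (Ici c) 0
  exact (hd0.derivWithin (uniqueDiffOn_Ici c c self_mem_Ici)).symm.trans
    (h2.derivWithin (uniqueDiffOn_Ici c c self_mem_Ici))

lemma deriv_eq_zero_left {c a d : ℝ} {e : ℝ → ℝ} (hac : a < c)
    (h0 : ∀ s ∈ Icc a c, e s = 0) (hd : HasDerivWithinAt e d (Iic c) c) : d = 0 := by
  have hmem : Icc a c ∈ nhdsWithin c (Iic c) := by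
    rw [← Ici_inter_Iic, inter_comm]
    exact inter_mem_nhdsWithin _ (Ici_mem_nhds hac)
  have heq : (fun _ => (0:ℝ)) =ᶠ[nhdsWithin c (Iic c)] e := by
    filter_upwards [hmem] with s hs
    exact (h0 s hs).symm
  have hd0 : HasDerivWithinAt (fun _ => (0:ℝ)) d (Iic c) c :=
    hd.congr_of_eventuallyEq heq (h0 c (right_mem_Icc.2 hac.le)).symm
  have h2 : HasDerivWithinAt (fun _ => (0:ℝ)) 0 (Iic c) c := hasDerivWithinAt_const c (Iic c) 0
  exact (hd0.derivWithin (uniqueDiffOn_Iic c c self_mem_Iic)).symm.trans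
    (h2.derivWithin (uniqueDiffOn_Iic c c self_mem_Iic))

lemma exists_tangent {da db θ : ℝ} (hab : a < b)
    (hecont : ContinuousOn e (Icc a b))
    (hediff : ∀ s ∈ Ioo a b, DifferentiableAt ℝ e s)
    (hda : HasDerivWithinAt e da (Ici a) a) (hdb : HasDerivWithinAt e db (Iic b) b)
    (hθ1 : da < θ) (hθ2 : θ < db) :
    ∃ s ∈ Ioo a b, HasDerivAt e θ s ∧ IsMinOn (fun s' => e s' - θ * s') (Icc a b) s := by
  set h : ℝ → ℝ := fun s => e s - θ * s with hh
  have hcont : ContinuousOn h (Icc a b) :=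
    hecont.sub ((continuous_const.mul continuous_id).continuousOn)
  obtain ⟨s₀, hs₀, hmin⟩ := isCompact_Icc.exists_isMinOn (nonempty_Icc.2 hab.le) hcont
  have hsub : ∀ (x d' : ℝ) (S : Set ℝ), HasDerivWithinAt e d' S x →
      HasDerivWithinAt h (d' - θ) S x := by
    intro x d' S hd'
    have := hd'.sub (((hasDerivAt_id x).const_mul θ).hasDerivWithinAt)
    simpa [hh, mul_comm, Pi.sub_def] using this
  have hna : s₀ ≠ a := by
    intro hEq
    subst hEq
    have hder : HasDerivWithinAt h (da - θ) (Ici s₀) s₀ := hsub _ _ _ hda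
    rw [hasDerivWithinAt_iff_tendsto_slope] at hder
    have hIoi : (Ici s₀ \ {s₀}) = Ioi s₀ := Ici_sdiff_left
    rw [hIoi] at hder
    have hev : ∀ᶠ v in nhdsWithin s₀ (Ioi s₀), 0 ≤ slope h s₀ v := by
      filter_upwards [self_mem_nhdsWithin,
        mem_nhdsWithin_of_mem_nhds (Iic_mem_nhds hab)] with v hv1 hv2
      rw [slope_def_field]
      apply div_nonneg _ (sub_nonneg.2 (le_of_lt hv1))
      have := isMinOn_iff.1 hmin v ⟨le_of_lt hv1, hv2⟩
      linarith
    have : (0:ℝ) ≤ da - θ := ge_of_tendsto hder hev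
    linarith
  have hnb : s₀ ≠ b := by
    intro hEq
    subst hEq
    have hder : HasDerivWithinAt h (db - θ) (Iic s₀) s₀ := hsub _ _ _ hdb
    rw [hasDerivWithinAt_iff_tendsto_slope] at hder
    have hIio : (Iic s₀ \ {s₀}) = Iio s₀ := Iic_sdiff_right
    rw [hIio] at hder
    have hev : ∀ᶠ v in nhdsWithin s₀ (Iio s₀), slope h s₀ v ≤ 0 := by
      filter_upwards [self_mem_nhdsWithin,
        mem_nhdsWithin_of_mem_nhds (Ici_mem_nhds hab)] with v hv1 hv2
      rw [slope_def_field]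
      apply div_nonpos_of_nonneg_of_nonpos
      · have := isMinOn_iff.1 hmin v ⟨hv2, le_of_lt (mem_Iio.1 hv1)⟩
        linarith
      · simpa using (sub_nonpos.2 (le_of_lt (mem_Iio.1 hv1)))
    have : db - θ ≤ 0 := by exact le_of_tendsto hder hev
    linarith
  have hs₀' : s₀ ∈ Ioo a b := ⟨lt_of_le_of_ne hs₀.1 (Ne.symm hna), lt_of_le_of_ne hs₀.2 hnb⟩
  have hloc : IsLocalMin h s₀ := hmin.isLocalMin (Icc_mem_nhds hs₀'.1 hs₀'.2)
  have hdiff : HasDerivAt e (deriv e s₀) s₀ := (hediff s₀ hs₀').hasDerivAt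
  have hd : HasDerivAt h (deriv e s₀ - θ) s₀ := by
    have := hdiff.sub ((hasDerivAt_id s₀).const_mul θ)
    simpa [hh, mul_comm, Pi.sub_def] using this
  have hzero := hloc.hasDerivAt_eq_zero hd
  have heθ : deriv e s₀ = θ := by linarith [hzero]
  exact ⟨s₀, hs₀', heθ ▸ hdiff, hmin⟩


/-! ### Context lemmas -/

variable {Ω : ℝ → Type*} [∀ t, MeasurableSpace (Ω t)]

noncomputable def Zt (P : ∀ t : ℝ, Measure (Ω t)) (X : ∀ t, Ω t → ℝ) (t s : ℝ) : ℝ≥0∞ :=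
  Zf (P t) (X t) s

def cert (P : ∀ t : ℝ, Measure (Ω t)) (X : ∀ t, Ω t → ℝ) (s : ℝ) : Prop :=
  ∀ᶠ t in atTop, Zt P X t s ≠ ⊤

noncomputable def Lam (P : ∀ t : ℝ, Measure (Ω t)) (X : ∀ t, Ω t → ℝ) (w : ℝ → ℝ)
    (t s : ℝ) : ℝ :=
  Real.log (Zt P X t s).toReal / w t

variable {P : ∀ t : ℝ, Measure (Ω t)} {X : ∀ t, Ω t → ℝ} {w : ℝ → ℝ}

lemma cert_zero [hP : ∀ t, IsFiniteMeasure (P t)] : cert P X 0 :=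
  Filter.Eventually.of_forall fun t => by
    rw [Zt, Zf_zero]; exact measure_ne_top _ _

lemma cert_mono [hP : ∀ t, IsFiniteMeasure (P t)] {s σ : ℝ} (hs : cert P X s)
    (h : 0 ≤ σ ∧ σ ≤ s ∨ s ≤ σ ∧ σ ≤ 0) : cert P X σ := by
  have hc : ∃ c, 0 ≤ c ∧ c ≤ 1 ∧ σ = c * s := by
    rcases eq_or_ne s 0 with rfl | hs0
    · refine ⟨0, le_refl 0, zero_le_one, ?_⟩
      rcases h with ⟨h1, h2⟩ | ⟨h1, h2⟩ <;> [skip; skip] <;> simp <;> linarith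
    · refine ⟨σ / s, ?_, ?_, (div_mul_cancel₀ σ hs0).symm⟩
      · rcases h with ⟨h1, h2⟩ | ⟨h1, h2⟩
        · exact div_nonneg h1 (le_trans h1 h2)
        · rw [← neg_div_neg_eq]
          exact div_nonneg (by linarith) (by by_contra hcon; push_neg at hcon; nlinarith)
      · rcases h with ⟨h1, h2⟩ | ⟨h1, h2⟩
        · have hspos : 0 < s := lt_of_le_of_ne (le_trans h1 h2) (Ne.symm hs0)
          exact (div_le_one hspos).2 h2
        · have hsneg : s < 0 := lt_of_le_of_ne (le_trans h1 h2) hs0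
          rw [← neg_div_neg_eq]
          exact (div_le_one (by linarith)).2 (by linarith)
  obtain ⟨c, hc0, hc1, hceq⟩ := hc
  apply hs.mono
  intro t ht
  have hle : Zt P X t σ ≤ P t univ + Zt P X t s := Zf_le (P t) (X t) hc0 hc1 hceq
  intro htop
  rw [htop] at hle
  have : P t univ + Zt P X t s < ⊤ :=
    ENNReal.add_lt_top.2 ⟨measure_lt_top _ _, lt_top_iff_ne_top.2 ht⟩
  exact absurd (lt_of_le_of_lt hle this) (lt_irrefl _)

variable {a b : ℝ} {e : ℝ → ℝ}

lemma force_r [hP : ∀ t, IsFiniteMeasure (P t)] (ha0 : a < 0)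
    (he' : ∀ s ∈ Icc a b, Tendsto (fun t => Lam P X w t s) atTop (nhds (e s)))
    {s : ℝ} (hs0 : 0 < s) (hsb : s ≤ b) (hnc : ¬ cert P X s) :
    ∀ s' ∈ Icc s b, e s' = 0 := by
  intro s' hs'
  have hfreq : ∃ᶠ t in atTop, Zt P X t s = ⊤ := by
    rw [cert, Filter.not_eventually] at hnc
    simpa using hnc
  have hs'0 : 0 < s' := lt_of_lt_of_le hs0 hs'.1
  have hfreq' : ∃ᶠ t in atTop, Lam P X w t s' = 0 := by
    apply hfreq.mono
    intro t ht
    have htop : Zt P X t s' = ⊤ := by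
      by_contra h'
      have hle : Zt P X t s ≤ P t univ + Zt P X t s' :=
        Zf_le (P t) (X t) (c := s / s') (div_nonneg hs0.le hs'0.le)
          ((div_le_one hs'0).2 hs'.1) (div_mul_cancel₀ s (ne_of_gt hs'0)).symm
      rw [ht] at hle
      have : P t univ + Zt P X t s' < ⊤ :=
        ENNReal.add_lt_top.2 ⟨measure_lt_top _ _, lt_top_iff_ne_top.2 h'⟩
      exact absurd (lt_of_le_of_lt hle this) (lt_irrefl _)
    rw [Lam, htop]
    simp
  exact tendsto_nhds_unique_of_frequently_eq
    (he' s' ⟨le_trans ha0.le (le_of_lt hs'0), hs'.2⟩) tendsto_const_nhds hfreq'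

lemma force_l [hP : ∀ t, IsFiniteMeasure (P t)] (h0b : 0 < b)
    (he' : ∀ s ∈ Icc a b, Tendsto (fun t => Lam P X w t s) atTop (nhds (e s)))
    {s : ℝ} (hs0 : s < 0) (has : a ≤ s) (hnc : ¬ cert P X s) :
    ∀ s' ∈ Icc a s, e s' = 0 := by
  intro s' hs'
  have hfreq : ∃ᶠ t in atTop, Zt P X t s = ⊤ := by
    rw [cert, Filter.not_eventually] at hnc
    simpa using hnc
  have hs'0 : s' < 0 := lt_of_le_of_lt hs'.2 hs0
  have hfreq' : ∃ᶠ t in atTop, Lam P X w t s' = 0 := by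
    apply hfreq.mono
    intro t ht
    have htop : Zt P X t s' = ⊤ := by
      by_contra h'
      have hle : Zt P X t s ≤ P t univ + Zt P X t s' := by
        apply Zf_le (P t) (X t) (c := s / s')
        · rw [← neg_div_neg_eq]
          exact div_nonneg (by linarith) (by linarith)
        · rw [← neg_div_neg_eq]
          exact (div_le_one (by linarith)).2 (by linarith [hs'.2])
        · exact (div_mul_cancel₀ s (ne_of_lt hs'0)).symm
      rw [ht] at hle
      have : P t univ + Zt P X t s' < ⊤ :=
        ENNReal.add_lt_top.2 ⟨measure_lt_top _ _, lt_top_iff_ne_top.2 h'⟩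
      exact absurd (lt_of_le_of_lt hle this) (lt_irrefl _)
    rw [Lam, htop]
    simp
  exact tendsto_nhds_unique_of_frequently_eq
    (he' s' ⟨hs'.1, le_trans hs'.2 (by linarith)⟩) tendsto_const_nhds hfreq'

lemma Pne_eventually {da db : ℝ} (hab : a < b)
    (he' : ∀ s ∈ Icc a b, Tendsto (fun t => Lam P X w t s) atTop (nhds (e s)))
    (hda : HasDerivWithinAt e da (Ici a) a) (hdb : HasDerivWithinAt e db (Iic b) b)
    (hJne : (Ioo da db).Nonempty) : ∀ᶠ t in atTop, P t ≠ 0 := by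
  by_contra h
  rw [Filter.not_eventually] at h
  have h' : ∃ᶠ t in atTop, P t = 0 := h.mono fun t ht => by simpa using ht
  have hz : ∀ s ∈ Icc a b, e s = 0 := by
    intro s hs
    apply tendsto_nhds_unique_of_frequently_eq (he' s hs) tendsto_const_nhds
    apply h'.mono
    intro t ht
    rw [Lam, Zt, Zf, ht]
    simp
  have hda0 : da = 0 := deriv_eq_zero_right hab hz hda
  have hdb0 : db = 0 := deriv_eq_zero_left hab hz hdb
  obtain ⟨θ, hθ⟩ := hJne
  rw [hda0, hdb0] at hθ
  exact absurd hθ.2 (not_lt.2 hθ.1.le)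

lemma cert_tangent [hP : ∀ t, IsFiniteMeasure (P t)] {da db : ℝ} (ha0 : a < 0) (h0b : 0 < b)
    (he' : ∀ s ∈ Icc a b, Tendsto (fun t => Lam P X w t s) atTop (nhds (e s)))
    (hda : HasDerivWithinAt e da (Ici a) a) (hdb : HasDerivWithinAt e db (Iic b) b)
    {s θ' : ℝ} (hs : s ∈ Ioo a b) (hder : HasDerivAt e θ' s)
    (h1 : da < θ') (h2 : θ' < db) : cert P X s := by
  by_contra hnc
  rcases lt_trichotomy s 0 with hneg | hzero | hpos
  · have hz := force_l h0b he' hneg hs.1.le hnc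
    have hda0 : da = 0 := deriv_eq_zero_right hs.1 hz hda
    have hθ'0 : θ' = 0 := deriv_eq_zero_left hs.1 hz hder.hasDerivWithinAt
    rw [hda0] at h1; rw [hθ'0] at h1; exact absurd h1 (lt_irrefl 0)
  · exact hnc (hzero ▸ cert_zero)
  · have hz := force_r ha0 he' hpos hs.2.le hnc
    have hdb0 : db = 0 := deriv_eq_zero_left hs.2 hz hdb
    have hθ'0 : θ' = 0 := deriv_eq_zero_right hs.2 hz hder.hasDerivWithinAt
    rw [hdb0] at h2; rw [hθ'0] at h2; exact absurd h2 (lt_irrefl 0)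

lemma Zform (hX : ∀ t, Measurable (X t)) (hw : ∀ t, 0 < w t)
    (hPne : ∀ᶠ t in atTop, P t ≠ 0) {s : ℝ} (hs : cert P X s) :
    ∀ᶠ t in atTop, Zt P X t s = ENNReal.ofReal (Real.exp (w t * Lam P X w t s)) := by
  filter_upwards [hs, hPne] with t h1 h2
  have hne0 : Zt P X t s ≠ 0 := Zf_ne_zero (hX t) h2 s
  have hpos : 0 < (Zt P X t s).toReal := ENNReal.toReal_pos hne0 h1
  rw [Lam, mul_comm, div_mul_cancel₀ _ (ne_of_gt (hw t)), Real.exp_log hpos,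
    ENNReal.ofReal_toReal h1]

lemma nbr [hP : ∀ t, IsFiniteMeasure (P t)] {db : ℝ} (ha0 : a < 0) (h0b : 0 < b)
    (he' : ∀ s ∈ Icc a b, Tendsto (fun t => Lam P X w t s) atTop (nhds (e s)))
    (hediff : ∀ s ∈ Ioo a b, DifferentiableAt ℝ e s)
    (hdb : HasDerivWithinAt e db (Iic b) b)
    {s θ' : ℝ} (hs : s ∈ Ioo a b) (hcs : cert P X s) (hder : HasDerivAt e θ' s)
    (hθdb : θ' < db) {κ : ℝ} (hκ : 0 < κ) :
    ∃ v, s < v ∧ v ≤ b ∧ cert P X v ∧ e v - e s ≤ (v - s) * (θ' + κ) := by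
  have hslope : Tendsto (slope e s) (nhdsWithin s (Ioi s)) (nhds θ') :=
    (hasDerivAt_iff_tendsto_slope.1 hder).mono_left
      (nhdsWithin_mono _ (fun y hy => mem_compl_singleton_iff.2 (ne_of_gt (mem_Ioi.1 hy))))
  have hev : ∀ᶠ v in nhdsWithin s (Ioi s), slope e s v < θ' + κ :=
    hslope.eventually_lt_const (by linarith)
  obtain ⟨c, hc, hsub⟩ := mem_nhdsGT_iff_exists_Ioc_subset.1 hev
  have hcIoi : s < c := mem_Ioi.1 hc
  have hslope_of : ∀ v, v ∈ Ioc s c → v ≤ b → e v - e s ≤ (v - s) * (θ' + κ) := by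
    intro v hv _
    have h1 : slope e s v < θ' + κ := hsub hv
    rw [slope_def_field] at h1
    have h2 : 0 < v - s := by linarith [hv.1]
    calc e v - e s = ((e v - e s) / (v - s)) * (v - s) := by field_simp
      _ ≤ (θ' + κ) * (v - s) := mul_le_mul_of_nonneg_right h1.le h2.le
      _ = (v - s) * (θ' + κ) := mul_comm _ _
  by_cases hsneg : s < 0
  · refine ⟨min c 0, lt_min hcIoi hsneg, le_trans (min_le_right _ _) h0b.le, ?_, ?_⟩
    · exact cert_mono hcs (Or.inr ⟨(lt_min hcIoi hsneg).le, min_le_right _ _⟩)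
    · exact hslope_of _ ⟨lt_min hcIoi hsneg, min_le_left _ _⟩
        (le_trans (min_le_right _ _) h0b.le)
  · push_neg at hsneg
    have hKey : ∃ v, s < v ∧ v ≤ min c b ∧ cert P X v := by
      by_contra hno
      push_neg at hno
      have hzero : ∀ s', s < s' → s' ≤ b → e s' = 0 := by
        intro s' h1 h2
        have hv1 : s < min (min c b) s' := lt_min (lt_min hcIoi hs.2) h1
        have hnc := hno _ hv1 (min_le_left _ _)
        have hvb : min (min c b) s' ≤ b := le_trans (min_le_left _ _) (min_le_right _ _)
        exact force_r ha0 he' (lt_of_le_of_lt hsneg hv1) hvb hnc s'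
          ⟨min_le_right _ _, h2⟩
      have hes : e s = 0 := by
        have hcw : ContinuousWithinAt e (Ioc s b) s :=
          ((hediff s hs).continuousAt).continuousWithinAt
        have hz2 : Tendsto e (nhdsWithin s (Ioc s b)) (nhds 0) := by
          apply Tendsto.congr' _ tendsto_const_nhds
          filter_upwards [self_mem_nhdsWithin] with v hv
          exact (hzero v hv.1 hv.2).symm
        haveI : (nhdsWithin s (Ioc s b)).NeBot := by
          rw [nhdsWithin_Ioc_eq_nhdsGT hs.2]
          infer_instance
        exact tendsto_nhds_unique hcw hz2
      have hz3 : ∀ s' ∈ Icc s b, e s' = 0 := by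
        intro s' hs'
        rcases lt_or_eq_of_le hs'.1 with h | h
        · exact hzero s' h hs'.2
        · rw [← h]; exact hes
      have hdb0 : db = 0 := deriv_eq_zero_left hs.2 hz3 hdb
      have hθ'0 : θ' = 0 := deriv_eq_zero_right hs.2 hz3 hder.hasDerivWithinAt
      rw [hdb0] at hθdb; rw [hθ'0] at hθdb; exact absurd hθdb (lt_irrefl 0)
    obtain ⟨v, hv1, hv2, hv3⟩ := hKey
    refine ⟨v, hv1, le_trans hv2 (min_le_right _ _), hv3,
      hslope_of v ⟨hv1, le_trans hv2 (min_le_left _ _)⟩ (le_trans hv2 (min_le_right _ _))⟩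

lemma nbl [hP : ∀ t, IsFiniteMeasure (P t)] {da : ℝ} (ha0 : a < 0) (h0b : 0 < b)
    (he' : ∀ s ∈ Icc a b, Tendsto (fun t => Lam P X w t s) atTop (nhds (e s)))
    (hediff : ∀ s ∈ Ioo a b, DifferentiableAt ℝ e s)
    (hda : HasDerivWithinAt e da (Ici a) a)
    {s θ' : ℝ} (hs : s ∈ Ioo a b) (hcs : cert P X s) (hder : HasDerivAt e θ' s)
    (hθda : da < θ') {κ : ℝ} (hκ : 0 < κ) :
    ∃ v, a ≤ v ∧ v < s ∧ cert P X v ∧ e v - e s ≤ (v - s) * (θ' - κ) := by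
  have hslope : Tendsto (slope e s) (nhdsWithin s (Iio s)) (nhds θ') :=
    (hasDerivAt_iff_tendsto_slope.1 hder).mono_left
      (nhdsWithin_mono _ (fun y hy => mem_compl_singleton_iff.2 (ne_of_lt (mem_Iio.1 hy))))
  have hev : ∀ᶠ v in nhdsWithin s (Iio s), θ' - κ < slope e s v :=
    hslope.eventually_const_lt (by linarith)
  obtain ⟨c, hc, hsub⟩ := mem_nhdsLT_iff_exists_Ico_subset.1 hev
  have hcIio : c < s := mem_Iio.1 hc
  have hslope_of : ∀ v, v ∈ Ico c s → e v - e s ≤ (v - s) * (θ' - κ) := by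
    intro v hv
    have h1 : θ' - κ < slope e s v := hsub hv
    rw [slope_def_field] at h1
    have h2 : v - s < 0 := by linarith [hv.2]
    have := (lt_div_iff_of_neg h2).1 h1
    linarith [this]
  by_cases hspos : 0 < s
  · refine ⟨max c 0, le_trans ha0.le (le_max_right _ _), max_lt hcIio hspos, ?_, ?_⟩
    · exact cert_mono hcs (Or.inl ⟨le_max_right _ _, (max_lt hcIio hspos).le⟩)
    · exact hslope_of _ ⟨le_max_left _ _, max_lt hcIio hspos⟩
  · push_neg at hspos
    have hKey : ∃ v, max c a ≤ v ∧ v < s ∧ cert P X v := by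
      by_contra hno
      push_neg at hno
      have hzero : ∀ s', a ≤ s' → s' < s → e s' = 0 := by
        intro s' h1 h2
        have hv1 : max (max c a) s' < s := max_lt (max_lt hcIio hs.1) h2
        have hnc := hno _ (le_max_left _ _) hv1
        have hva : a ≤ max (max c a) s' := le_trans (le_max_right c a) (le_max_left _ _)
        exact force_l h0b he' (lt_of_lt_of_le hv1 hspos) hva hnc s'
          ⟨h1, le_max_right _ _⟩
      have hes : e s = 0 := by
        have hcw : ContinuousWithinAt e (Ico a s) s :=
          ((hediff s hs).continuousAt).continuousWithinAt
        have hz2 : Tendsto e (nhdsWithin s (Ico a s)) (nhds 0) := by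
          apply Tendsto.congr' _ tendsto_const_nhds
          filter_upwards [self_mem_nhdsWithin] with v hv
          exact (hzero v hv.1 hv.2).symm
        haveI : (nhdsWithin s (Ico a s)).NeBot := by
          rw [nhdsWithin_Ico_eq_nhdsLT hs.1]
          infer_instance
        exact tendsto_nhds_unique hcw hz2
      have hz3 : ∀ s' ∈ Icc a s, e s' = 0 := by
        intro s' hs'
        rcases lt_or_eq_of_le hs'.2 with h | h
        · exact hzero s' hs'.1 h
        · rw [h]; exact hes
      have hda0 : da = 0 := deriv_eq_zero_right hs.1 hz3 hda
      have hθ'0 : θ' = 0 := deriv_eq_zero_left hs.1 hz3 hder.hasDerivWithinAt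
      rw [hda0] at hθda; rw [hθ'0] at hθda; exact absurd hθda (lt_irrefl 0)
    obtain ⟨v, hv1, hv2, hv3⟩ := hKey
    exact ⟨v, le_trans (le_max_right c a) hv1, hv2, hv3,
      hslope_of v ⟨le_trans (le_max_left c a) hv1, hv2⟩⟩

lemma approx [hP : ∀ t, IsFiniteMeasure (P t)] {da db : ℝ} (ha0 : a < 0) (h0b : 0 < b)
    (hecont : ContinuousOn e (Icc a b))
    (he' : ∀ s ∈ Icc a b, Tendsto (fun t => Lam P X w t s) atTop (nhds (e s)))
    (hda : HasDerivWithinAt e da (Ici a) a) (hdb : HasDerivWithinAt e db (Iic b) b)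
    {q I' ε' : ℝ} (hε' : 0 < ε') (hqda : da ≤ q) (hqdb : q ≤ db)
    (hIq : I' ≤ flt a b e q) :
    ∃ s ∈ Icc a b, cert P X s ∧ I' - ε' ≤ q * s - e s := by
  have hab : a < b := lt_trans ha0 h0b
  obtain ⟨st, hst, hmin, hval⟩ := flt_min hab.le hecont q
  by_cases hcst : cert P X st
  · exact ⟨st, hst, hcst, by rw [← hval]; linarith⟩
  rcases lt_trichotomy st 0 with hneg | hzero | hpos
  · -- st < 0 : mirrored construction on the left
    set U : Set ℝ := {v : ℝ | v ∈ Icc a 0 ∧ ¬ cert P X v} with hUdef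
    have hUne : st ∈ U := ⟨⟨hst.1, hneg.le⟩, hcst⟩
    have hUbdd : BddAbove U := ⟨0, fun v hv => hv.1.2⟩
    set ρ := sSup U with hρdef
    have hρ0 : ρ ≤ 0 := csSup_le ⟨st, hUne⟩ fun v hv => hv.1.2
    have hρst : st ≤ ρ := le_csSup hUbdd hUne
    have haρ : a ≤ ρ := le_trans hst.1 hρst
    have hρb : ρ ≤ b := le_trans hρ0 h0b.le
    have hcertgt : ∀ v, v ≤ 0 → ρ < v → cert P X v := by
      intro v h1 h2
      by_contra hnc
      exact absurd (le_csSup hUbdd ⟨⟨le_trans haρ h2.le, h1⟩, hnc⟩) (not_le.2 h2)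
    have hzero : ∀ v, a ≤ v → v < ρ → e v = 0 := by
      intro v h1 h2
      obtain ⟨u, hu, huv⟩ := exists_lt_of_lt_csSup ⟨st, hUne⟩ h2
      have hu0 : u < 0 := lt_of_le_of_ne hu.1.2 (fun h => hu.2 (h ▸ cert_zero))
      exact force_l h0b he' hu0 hu.1.1 hu.2 v ⟨h1, huv.le⟩
    have heρ : e ρ = 0 := by
      rcases lt_or_eq_of_le haρ with h | h
      · have hcw : ContinuousWithinAt e (Ico a ρ) ρ :=
          ((hecont ρ ⟨haρ, hρb⟩).mono (fun v hv => ⟨hv.1, le_trans hv.2.le hρb⟩))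
        have hz2 : Tendsto e (nhdsWithin ρ (Ico a ρ)) (nhds 0) := by
          apply Tendsto.congr' _ tendsto_const_nhds
          filter_upwards [self_mem_nhdsWithin] with v hv
          exact (hzero v hv.1 hv.2).symm
        haveI : (nhdsWithin ρ (Ico a ρ)).NeBot := by
          rw [nhdsWithin_Ico_eq_nhdsLT h]; infer_instance
        exact tendsto_nhds_unique hcw hz2
      · have hsta : st = a := le_antisymm (by linarith [hρst]) hst.1
        have h3 := force_l h0b he' hneg hst.1 hcst st ⟨hst.1, le_refl st⟩
        rw [← h, ← hsta]; exact h3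
    have hest : e st = 0 := by
      rcases lt_or_eq_of_le hρst with h | h
      · exact hzero st hst.1 h
      · rw [h]; exact heρ
    rcases lt_or_eq_of_le haρ with haltρ | haeqρ
    · have hz4 : ∀ v ∈ Icc a ρ, e v = 0 := by
        intro v hv
        rcases lt_or_eq_of_le hv.2 with h | h
        · exact hzero v hv.1 h
        · rw [h]; exact heρ
      have hda0 : da = 0 := deriv_eq_zero_right haltρ hz4 hda
      have hq0 : 0 ≤ q := by rw [hda0] at hqda; exact hqda
      have hqst : q * st ≤ q * ρ := mul_le_mul_of_nonneg_left hρst hq0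
      by_cases hcρ : cert P X ρ
      · refine ⟨ρ, ⟨haρ, hρb⟩, hcρ, ?_⟩
        rw [heρ]
        rw [hest] at hval
        linarith
      · have hρneg : ρ < 0 := lt_of_le_of_ne hρ0 (fun hh => hcρ (hh ▸ cert_zero))
        obtain ⟨η, hη, hco⟩ := Metric.continuousWithinAt_iff.1
          (hecont ρ ⟨haρ, hρb⟩) (ε'/2) (by linarith)
        set v := min (ρ/2) (ρ + η/2) with hvdef
        have hv1 : v < 0 := lt_of_le_of_lt (min_le_left _ _) (by linarith)
        have hv2 : ρ < v := lt_min (by linarith) (by linarith)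
        have hv3 : dist v ρ < η := by
          rw [Real.dist_eq, abs_of_nonneg (by linarith)]
          have h5 : v ≤ ρ + η/2 := min_le_right _ _
          linarith
        have hvmem : v ∈ Icc a b := ⟨by linarith, by linarith⟩
        have hev : |e v - e ρ| < ε'/2 := by
          have := hco hvmem hv3
          rwa [Real.dist_eq] at this
        refine ⟨v, hvmem, hcertgt v hv1.le hv2, ?_⟩
        have hqv : q * st ≤ q * v := mul_le_mul_of_nonneg_left (by linarith) hq0
        have h5 := abs_lt.1 hev
        rw [heρ] at h5
        rw [hest] at hval
        linarith
    · have hsta : st = a := le_antisymm (by rw [haeqρ]; exact hρst) hst.1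
      have heaz : e a = 0 := by rw [haeqρ]; exact heρ
      obtain ⟨η, hη, hco⟩ := Metric.continuousWithinAt_iff.1
        (hecont a ⟨le_refl a, hab.le⟩) (ε'/2) (by linarith)
      set m := min (η/2) (ε'/(4*(|q|+1))) with hmdef
      have hm0 : 0 < m := lt_min (by linarith) (by positivity)
      set v := min 0 (a + m) with hvdef
      have hv0 : v ≤ 0 := min_le_left _ _
      have hva : a < v := lt_min ha0 (by linarith)
      have hvd : |v - a| ≤ m := by
        rw [abs_of_nonneg (by linarith)]
        have h5 : v ≤ a + m := min_le_right _ _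
        linarith
      have hvmem : v ∈ Icc a b := ⟨hva.le, by linarith⟩
      have hev : |e v - e a| < ε'/2 := by
        have := hco hvmem (by
          rw [Real.dist_eq]
          exact lt_of_le_of_lt hvd (lt_of_le_of_lt (min_le_left _ _) (by linarith)))
        rwa [Real.dist_eq] at this
      refine ⟨v, hvmem, hcertgt v hv0 (by rw [haeqρ] at hva; exact hva), ?_⟩
      have h6 : |q*v - q*a| ≤ |q| * m := by
        rw [← mul_sub, abs_mul]
        exact mul_le_mul_of_nonneg_left hvd (abs_nonneg q)
      have h7 : |q| * m ≤ ε'/4 := by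
        have h8 : |q| * m ≤ |q| * (ε'/(4*(|q|+1))) :=
          mul_le_mul_of_nonneg_left (min_le_right _ _) (abs_nonneg q)
        have h9 : |q| * (ε'/(4*(|q|+1))) ≤ ε'/4 := by
          rw [mul_comm, div_mul_eq_mul_div, div_le_div_iff₀ (by positivity) (by norm_num)]
          nlinarith [abs_nonneg q, hε'.le]
        linarith
      rw [hsta, heaz] at hval
      have h10 := abs_lt.1 hev
      rw [heaz] at h10
      have h11 := abs_le.1 h6
      linarith
  · exact absurd cert_zero (hzero ▸ hcst)
  · -- st > 0
    set U : Set ℝ := {v : ℝ | v ∈ Icc 0 b ∧ ¬ cert P X v} with hUdef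
    have hUne : st ∈ U := ⟨⟨hpos.le, hst.2⟩, hcst⟩
    have hUbdd : BddBelow U := ⟨0, fun v hv => hv.1.1⟩
    set ρ := sInf U with hρdef
    have hρ0 : 0 ≤ ρ := le_csInf ⟨st, hUne⟩ fun v hv => hv.1.1
    have hρst : ρ ≤ st := csInf_le hUbdd hUne
    have hρb : ρ ≤ b := le_trans hρst hst.2
    have haρ : a ≤ ρ := le_trans ha0.le hρ0
    have hcertlt : ∀ v, 0 ≤ v → v < ρ → cert P X v := by
      intro v h1 h2
      by_contra hnc
      exact absurd (csInf_le hUbdd ⟨⟨h1, le_trans h2.le hρb⟩, hnc⟩) (not_le.2 h2)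
    have hzero : ∀ v, ρ < v → v ≤ b → e v = 0 := by
      intro v h1 h2
      obtain ⟨u, hu, huv⟩ := exists_lt_of_csInf_lt ⟨st, hUne⟩ h1
      have hu0 : 0 < u := lt_of_le_of_ne hu.1.1 (fun h => hu.2 (h ▸ cert_zero))
      exact force_r ha0 he' hu0 hu.1.2 hu.2 v ⟨huv.le, h2⟩
    have heρ : e ρ = 0 := by
      rcases lt_or_eq_of_le hρb with h | h
      · have hcw : ContinuousWithinAt e (Ioc ρ b) ρ :=
          ((hecont ρ ⟨haρ, hρb⟩).mono (fun v hv => ⟨le_trans haρ hv.1.le, hv.2⟩))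
        have hz2 : Tendsto e (nhdsWithin ρ (Ioc ρ b)) (nhds 0) := by
          apply Tendsto.congr' _ tendsto_const_nhds
          filter_upwards [self_mem_nhdsWithin] with v hv
          exact (hzero v hv.1 hv.2).symm
        haveI : (nhdsWithin ρ (Ioc ρ b)).NeBot := by
          rw [nhdsWithin_Ioc_eq_nhdsGT h]; infer_instance
        exact tendsto_nhds_unique hcw hz2
      · have hstb : st = b := le_antisymm hst.2 (by rw [h] at hρst; exact hρst)
        have h3 := force_r ha0 he' hpos hst.2 hcst st ⟨le_refl st, hst.2⟩
        rw [h, ← hstb]; exact h3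
    have hest : e st = 0 := by
      rcases lt_or_eq_of_le hρst with h | h
      · exact hzero st h hst.2
      · rw [← h]; exact heρ
    rcases lt_or_eq_of_le hρb with hρltb | hρeqb
    · have hz4 : ∀ v ∈ Icc ρ b, e v = 0 := by
        intro v hv
        rcases lt_or_eq_of_le hv.1 with h | h
        · exact hzero v h hv.2
        · rw [← h]; exact heρ
      have hdb0 : db = 0 := deriv_eq_zero_left hρltb hz4 hdb
      have hq0 : q ≤ 0 := by rw [hdb0] at hqdb; exact hqdb
      have hqst : q * st ≤ q * ρ := mul_le_mul_of_nonpos_left hρst hq0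
      by_cases hcρ : cert P X ρ
      · refine ⟨ρ, ⟨haρ, hρb⟩, hcρ, ?_⟩
        rw [heρ]
        rw [hest] at hval
        linarith
      · have hρpos : 0 < ρ := lt_of_le_of_ne hρ0 (fun hh => hcρ (hh ▸ cert_zero))
        obtain ⟨η, hη, hco⟩ := Metric.continuousWithinAt_iff.1
          (hecont ρ ⟨haρ, hρb⟩) (ε'/2) (by linarith)
        set v := max (ρ/2) (ρ - η/2) with hvdef
        have hv1 : 0 < v := lt_of_lt_of_le (by linarith) (le_max_left _ _)
        have hv2 : v < ρ := max_lt (by linarith) (by linarith)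
        have hv3 : dist v ρ < η := by
          rw [Real.dist_eq, abs_of_nonpos (by linarith)]
          have h5 : ρ - η/2 ≤ v := le_max_right _ _
          linarith
        have hvmem : v ∈ Icc a b := ⟨by linarith, by linarith⟩
        have hev : |e v - e ρ| < ε'/2 := by
          have := hco hvmem hv3
          rwa [Real.dist_eq] at this
        refine ⟨v, hvmem, hcertlt v hv1.le hv2, ?_⟩
        have hqv : q * ρ ≤ q * v := mul_le_mul_of_nonpos_left hv2.le hq0
        have h5 := abs_lt.1 hev
        rw [heρ] at h5
        rw [hest] at hval
        linarith
    · have hstb : st = b := le_antisymm hst.2 (by rw [hρeqb] at hρst; exact hρst)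
      have hebz : e b = 0 := by rw [← hρeqb]; exact heρ
      obtain ⟨η, hη, hco⟩ := Metric.continuousWithinAt_iff.1
        (hecont b ⟨hab.le, le_refl b⟩) (ε'/2) (by linarith)
      set m := min (η/2) (ε'/(4*(|q|+1))) with hmdef
      have hm0 : 0 < m := lt_min (by linarith) (by positivity)
      set v := max 0 (b - m) with hvdef
      have hv0 : 0 ≤ v := le_max_left _ _
      have hvb : v < b := max_lt h0b (by linarith)
      have hvd : |v - b| ≤ m := by
        rw [abs_of_nonpos (by linarith)]
        have h5 : b - m ≤ v := le_max_right _ _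
        linarith
      have hvmem : v ∈ Icc a b := ⟨by linarith, hvb.le⟩
      have hev : |e v - e b| < ε'/2 := by
        have := hco hvmem (by
          rw [Real.dist_eq]
          exact lt_of_le_of_lt hvd (lt_of_le_of_lt (min_le_left _ _) (by linarith)))
        rwa [Real.dist_eq] at this
      refine ⟨v, hvmem, hcertlt v hv0 (by rw [hρeqb]; exact hvb), ?_⟩
      have h6 : |q*v - q*b| ≤ |q| * m := by
        rw [← mul_sub, abs_mul]
        exact mul_le_mul_of_nonneg_left hvd (abs_nonneg q)
      have h7 : |q| * m ≤ ε'/4 := by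
        have h8 : |q| * m ≤ |q| * (ε'/(4*(|q|+1))) :=
          mul_le_mul_of_nonneg_left (min_le_right _ _) (abs_nonneg q)
        have h9 : |q| * (ε'/(4*(|q|+1))) ≤ ε'/4 := by
          rw [mul_comm, div_mul_eq_mul_div, div_le_div_iff₀ (by positivity) (by norm_num)]
          nlinarith [abs_nonneg q, hε'.le]
        linarith
      rw [hstb, hebz] at hval
      have h10 := abs_lt.1 hev
      rw [hebz] at h10
      have h11 := abs_le.1 h6
      linarith

set_option maxHeartbeats 1000000 in
lemma lower [hP : ∀ t, IsFiniteMeasure (P t)] {da db : ℝ}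
    (hX : ∀ t, Measurable (X t)) (hw : ∀ t, 0 < w t) (hwtop : Tendsto w atTop atTop)
    (ha0 : a < 0) (h0b : 0 < b)
    (hecont : ContinuousOn e (Icc a b))
    (hediff : ∀ s ∈ Ioo a b, DifferentiableAt ℝ e s)
    (hda : HasDerivWithinAt e da (Ici a) a) (hdb : HasDerivWithinAt e db (Iic b) b)
    (he' : ∀ s ∈ Icc a b, Tendsto (fun t => Lam P X w t s) atTop (nhds (e s)))
    (hPne : ∀ᶠ t in atTop, P t ≠ 0)
    {J : Set ℝ} (hJopen : IsOpen J) (hJ : J ⊆ Ioo da db) {θ : ℝ} (hθ : θ ∈ J)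
    {ε : ℝ} (hε : 0 < ε) :
    ∀ᶠ t in atTop, ENNReal.ofReal (Real.exp (w t * (-flt a b e θ - ε))) ≤
      P t {x | X t x / w t ∈ J} := by
  obtain ⟨hθda, hθdb⟩ := hJ hθ
  have hab : a < b := lt_trans ha0 h0b
  obtain ⟨s, hsIoo, hder, hmin⟩ := exists_tangent hab hecont hediff hda hdb hθda hθdb
  have hsIcc : s ∈ Icc a b := Ioo_subset_Icc_self hsIoo
  have hflt : flt a b e θ = θ * s - e s := flt_eq hsIcc hmin
  have hcs : cert P X s := cert_tangent ha0 h0b he' hda hdb hsIoo hder hθda hθdb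
  obtain ⟨r, hr, hball⟩ := Metric.isOpen_iff.1 hJopen θ hθ
  set δ := min (r/2) (ε/(2*(|s|+1))) with hδdef
  have hδ : 0 < δ := lt_min (by linarith) (by positivity)
  have hIccJ : Icc (θ - δ) (θ + δ) ⊆ J := by
    intro y hy
    apply hball
    rw [Metric.mem_ball, Real.dist_eq]
    have h1 : |y - θ| ≤ δ := abs_le.2 ⟨by linarith [hy.1], by linarith [hy.2]⟩
    exact lt_of_le_of_lt h1 (lt_of_le_of_lt (min_le_left _ _) (by linarith))
  obtain ⟨v1, hv1s, hv1b, hv1c, hv1e⟩ := nbr ha0 h0b he' hediff hdb hsIoo hcs hder hθdb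
    (κ := δ/4) (by linarith)
  obtain ⟨v2, hv2a, hv2s, hv2c, hv2e⟩ := nbl ha0 h0b he' hediff hda hsIoo hcs hder hθda
    (κ := δ/4) (by linarith)
  have hu1 : 0 < v1 - s := by linarith [hv1s]
  have hu2 : 0 < s - v2 := by linarith [hv2s]
  set u1 := v1 - s with hu1def
  set u2 := s - v2 with hu2def
  set κ := min (min (u1*δ/16) (u2*δ/16)) (ε/4) with hκdef
  have hκpos : 0 < κ := lt_min (lt_min (by positivity) (by positivity)) (by linarith)
  have hκ1 : κ ≤ u1*δ/16 := le_trans (min_le_left _ _) (min_le_left _ _)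
  have hκ2 : κ ≤ u2*δ/16 := le_trans (min_le_left _ _) (min_le_right _ _)
  have hκ3 : κ ≤ ε/4 := min_le_right _ _
  have hv1m : v1 ∈ Icc a b := ⟨le_trans hsIcc.1 (le_of_lt hv1s), hv1b⟩
  have hv2m : v2 ∈ Icc a b := ⟨hv2a, le_trans hv2s.le hsIcc.2⟩
  have hevs := (Metric.tendsto_nhds.1 (he' s hsIcc)) κ hκpos
  have hev1 := (Metric.tendsto_nhds.1 (he' v1 hv1m)) κ hκpos
  have hev2 := (Metric.tendsto_nhds.1 (he' v2 hv2m)) κ hκpos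
  have hwev := hwtop.eventually_ge_atTop
    (max (Real.log 4 / (u1*δ/8)) (max (Real.log 4 / (u2*δ/8)) (Real.log 2 / (ε/4))))
  filter_upwards [hevs, hev1, hev2, Zform hX hw hPne hcs, Zform hX hw hPne hv1c,
    Zform hX hw hPne hv2c, hPne, hwev] with t hLs hL1 hL2 hzs hz1 hz2 hpne hwt
  rw [Real.dist_eq] at hLs hL1 hL2
  set W := w t with hWdef
  have hW : 0 < W := hw t
  set L0 := Lam P X w t s with hL0def
  set L1 := Lam P X w t v1 with hL1def
  set L2 := Lam P X w t v2 with hL2def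
  have hLs' := abs_lt.1 hLs
  have hL1' := abs_lt.1 hL1
  have hL2' := abs_lt.1 hL2
  have hw1 : Real.log 4 ≤ W * (u1*δ/8) := by
    have h1 : Real.log 4 / (u1*δ/8) ≤ W := le_trans (le_max_left _ _) hwt
    rw [div_le_iff₀ (by positivity)] at h1
    linarith [h1]
  have hw2 : Real.log 4 ≤ W * (u2*δ/8) := by
    have h1 : Real.log 4 / (u2*δ/8) ≤ W :=
      le_trans (le_trans (le_max_left _ _) (le_max_right _ _)) hwt
    rw [div_le_iff₀ (by positivity)] at h1
    linarith [h1]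
  have hw3 : Real.log 2 ≤ W * (ε/4) := by
    have h1 : Real.log 2 / (ε/4) ≤ W :=
      le_trans (le_trans (le_max_right _ _) (le_max_right _ _)) hwt
    rw [div_le_iff₀ (by positivity)] at h1
    linarith [h1]
  have hδle : δ ≤ ε/(2*(|s|+1)) := min_le_right _ _
  clear_value W δ κ u1 u2 L0 L1 L2
  set A : Set (Ω t) := (X t) ⁻¹' (Icc (W*(θ-δ/2)) (W*(θ+δ/2))) with hAdef
  have hAmeas : MeasurableSet A := (hX t) measurableSet_Icc
  have hAJ : A ⊆ {x | X t x / W ∈ J} := by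
    intro x hx
    have hx' : X t x ∈ Icc (W*(θ-δ/2)) (W*(θ+δ/2)) := hx
    have h1 : θ - δ ≤ X t x / W := by
      rw [le_div_iff₀ hW]
      nlinarith [hx'.1, mul_pos hW hδ]
    have h2 : X t x / W ≤ θ + δ := by
      rw [div_le_iff₀ hW]
      nlinarith [hx'.2, mul_pos hW hδ]
    exact hIccJ ⟨h1, h2⟩
  set SR : Set (Ω t) := {x | W*(θ+δ/2) ≤ X t x} with hSRdef
  set SL : Set (Ω t) := {x | X t x ≤ W*(θ-δ/2)} with hSLdef
  have hsplit : Zf (P t) (X t) s ≤ (∫⁻ x in A, ENNReal.ofReal (Real.exp (s * X t x)) ∂ P t)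
      + ((∫⁻ x in SR, ENNReal.ofReal (Real.exp (s * X t x)) ∂ P t)
        + (∫⁻ x in SL, ENNReal.ofReal (Real.exp (s * X t x)) ∂ P t)) := by
    rw [Zf_def, ← lintegral_add_compl (fun x => ENNReal.ofReal (Real.exp (s * X t x))) hAmeas]
    apply add_le_add_right
    calc ∫⁻ x in Aᶜ, ENNReal.ofReal (Real.exp (s * X t x)) ∂ P t
        ≤ ∫⁻ x in SR ∪ SL, ENNReal.ofReal (Real.exp (s * X t x)) ∂ P t := by
          apply lintegral_mono_set
          intro x hx
          rcases le_or_gt (W*(θ+δ/2)) (X t x) with hc | hc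
          · exact mem_union_left _ hc
          · rcases le_or_gt (X t x) (W*(θ-δ/2)) with hc2 | hc2
            · exact mem_union_right _ hc2
            · exact absurd (⟨hc2.le, hc.le⟩ : X t x ∈ Icc (W*(θ-δ/2)) (W*(θ+δ/2))) hx
      _ ≤ _ := lintegral_union_le _ _ _
  have hR : ∫⁻ x in SR, ENNReal.ofReal (Real.exp (s * X t x)) ∂ P t ≤
      ENNReal.ofReal (Real.exp (-(W*(u1*(θ+δ/2))))) * Zf (P t) (X t) v1 := by
    apply tilt (hX t)
    intro x hx
    have hx' : W*(θ+δ/2) ≤ X t x := hx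
    have h1 := mul_le_mul_of_nonneg_left hx' hu1.le
    rw [hu1def] at h1 ⊢
    linarith [h1]
  have hz1' : Zf (P t) (X t) v1 = ENNReal.ofReal (Real.exp (W * L1)) := hz1
  have hz2' : Zf (P t) (X t) v2 = ENNReal.ofReal (Real.exp (W * L2)) := hz2
  have hzs' : Zf (P t) (X t) s = ENNReal.ofReal (Real.exp (W * L0)) := hzs
  have hR2 : ENNReal.ofReal (Real.exp (-(W*(u1*(θ+δ/2))))) * Zf (P t) (X t) v1 ≤
      ENNReal.ofReal (Real.exp (W*L0 - Real.log 4)) := by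
    rw [hz1', ← ENNReal.ofReal_mul (Real.exp_nonneg _), ← Real.exp_add]
    apply ENNReal.ofReal_le_ofReal
    apply Real.exp_le_exp.2
    have eslope : e v1 - e s ≤ u1 * (θ + δ/4) := hv1e
    have key : L1 - L0 - u1*(θ+δ/2) ≤ -(u1*δ/8) := by
      linarith [hL1'.2, hLs'.1, eslope, hκ1]
    linarith [mul_le_mul_of_nonneg_left key hW.le, hw1]
  have hL : ∫⁻ x in SL, ENNReal.ofReal (Real.exp (s * X t x)) ∂ P t ≤
      ENNReal.ofReal (Real.exp (W*(u2*(θ-δ/2)))) * Zf (P t) (X t) v2 := by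
    apply tilt (hX t)
    intro x hx
    have hx' : X t x ≤ W*(θ-δ/2) := hx
    have h1 := mul_le_mul_of_nonneg_left hx' hu2.le
    rw [hu2def] at h1 ⊢
    linarith [h1]
  have hL2b : ENNReal.ofReal (Real.exp (W*(u2*(θ-δ/2)))) * Zf (P t) (X t) v2 ≤
      ENNReal.ofReal (Real.exp (W*L0 - Real.log 4)) := by
    rw [hz2', ← ENNReal.ofReal_mul (Real.exp_nonneg _), ← Real.exp_add]
    apply ENNReal.ofReal_le_ofReal
    apply Real.exp_le_exp.2
    have eslope : e v2 - e s ≤ -(u2 * (θ - δ/4)) := by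
      rw [hu2def]
      linarith [hv2e]
    have key : L2 - L0 + u2*(θ-δ/2) ≤ -(u2*δ/8) := by
      linarith [hL2'.2, hLs'.1, eslope, hκ2]
    linarith [mul_le_mul_of_nonneg_left key hW.le, hw2]
  have hsum : ENNReal.ofReal (Real.exp (W*L0 - Real.log 4)) +
      ENNReal.ofReal (Real.exp (W*L0 - Real.log 4)) =
      ENNReal.ofReal (Real.exp (W*L0 - Real.log 2)) := by
    rw [← ENNReal.ofReal_add (Real.exp_nonneg _) (Real.exp_nonneg _)]
    congr 1
    rw [Real.exp_sub, Real.exp_sub,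
      show Real.exp (Real.log 4) = 4 from Real.exp_log (by norm_num),
      show Real.exp (Real.log 2) = 2 from Real.exp_log (by norm_num)]
    ring
  have hAlow : ENNReal.ofReal (Real.exp (W*L0 - Real.log 2)) ≤
      ∫⁻ x in A, ENNReal.ofReal (Real.exp (s * X t x)) ∂ P t := by
    have h1 : Zf (P t) (X t) s ≤
        (∫⁻ x in A, ENNReal.ofReal (Real.exp (s * X t x)) ∂ P t) +
          ENNReal.ofReal (Real.exp (W*L0 - Real.log 2)) := by
      refine le_trans hsplit (add_le_add_right ?_ _)
      exact le_trans (add_le_add (hR.trans hR2) (hL.trans hL2b)) (le_of_eq hsum)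
    have h2 : ENNReal.ofReal (Real.exp (W*L0)) -
        ENNReal.ofReal (Real.exp (W*L0 - Real.log 2)) ≤
        ∫⁻ x in A, ENNReal.ofReal (Real.exp (s * X t x)) ∂ P t := by
      rw [tsub_le_iff_right, ← hzs']
      exact h1
    calc ENNReal.ofReal (Real.exp (W*L0 - Real.log 2))
        = ENNReal.ofReal (Real.exp (W*L0)) -
          ENNReal.ofReal (Real.exp (W*L0 - Real.log 2)) := by
          rw [← ENNReal.ofReal_sub _ (Real.exp_nonneg _)]
          congr 1
          rw [Real.exp_sub, show Real.exp (Real.log 2) = 2 from Real.exp_log (by norm_num)]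
          ring
      _ ≤ _ := h2
  have hAup : ∫⁻ x in A, ENNReal.ofReal (Real.exp (s * X t x)) ∂ P t ≤
      P t A * ENNReal.ofReal (Real.exp (W*(s*θ) + W*(|s| * (δ/2)))) := by
    calc ∫⁻ x in A, ENNReal.ofReal (Real.exp (s * X t x)) ∂ P t
        ≤ ∫⁻ _x in A, ENNReal.ofReal (Real.exp (W*(s*θ) + W*(|s| * (δ/2)))) ∂ P t := by
          apply setLIntegral_mono measurable_const
          intro x hx
          apply ENNReal.ofReal_le_ofReal
          apply Real.exp_le_exp.2
          have hx' : X t x ∈ Icc (W*(θ-δ/2)) (W*(θ+δ/2)) := hx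
          have hb1 : |X t x - W*θ| ≤ W*(δ/2) := by
            apply abs_le.2
            constructor <;> linarith [hx'.1, hx'.2]
          have h1 : s*(X t x - W*θ) ≤ |s| * (W*(δ/2)) := by
            calc s*(X t x - W*θ) ≤ |s*(X t x - W*θ)| := le_abs_self _
              _ = |s| * |X t x - W*θ| := abs_mul _ _
              _ ≤ |s| * (W*(δ/2)) := mul_le_mul_of_nonneg_left hb1 (abs_nonneg s)
          linarith [h1]
      _ = P t A * ENNReal.ofReal (Real.exp (W*(s*θ) + W*(|s| * (δ/2)))) := by
          rw [setLIntegral_const, mul_comm]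
  have hPA : ENNReal.ofReal
      (Real.exp (W*L0 - Real.log 2 - (W*(s*θ) + W*(|s| * (δ/2))))) ≤ P t A :=
    cancel_lower (le_trans hAlow hAup)
  have hfin : W * (-flt a b e θ - ε) ≤
      W*L0 - Real.log 2 - (W*(s*θ) + W*(|s| * (δ/2))) := by
    have hδ2 : |s| * δ ≤ ε/2 := by
      have h1 : |s| * δ ≤ |s| * (ε/(2*(|s|+1))) :=
        mul_le_mul_of_nonneg_left hδle (abs_nonneg s)
      have h2 : |s| * (ε/(2*(|s|+1))) ≤ ε/2 := by
        rw [mul_comm, div_mul_eq_mul_div, div_le_div_iff₀ (by positivity) (by norm_num)]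
        nlinarith [abs_nonneg s, hε.le]
      linarith
    have hLs2 : e s - κ ≤ L0 := by linarith [hLs'.1]
    rw [hflt]
    linarith [mul_le_mul_of_nonneg_left hδ2 hW.le, mul_le_mul_of_nonneg_left hLs2 hW.le,
      hw3, mul_le_mul_of_nonneg_left hκ3 hW.le, mul_nonneg hW.le hε.le]
  calc ENNReal.ofReal (Real.exp (W * (-flt a b e θ - ε)))
      ≤ ENNReal.ofReal (Real.exp (W*L0 - Real.log 2 - (W*(s*θ) + W*(|s| * (δ/2))))) :=
        ENNReal.ofReal_le_ofReal (Real.exp_le_exp.2 hfin)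
    _ ≤ P t A := hPA
    _ ≤ P t {x | X t x / W ∈ J} := measure_mono hAJ
end GE


set_option maxHeartbeats 1000000 in
/-- Local Gärtner–Ellis theorem: under assumption (LD), if `e` is differentiable on `(a,b)`
and `0 ∈ (a,b)`, then for every open `J ⊆ (D⁺e(a), D⁻e(b))`:
`lim (1/w_t) log P_t(X_t/w_t ∈ J) = − inf_{θ∈J} φ(θ)`. -/
theorem local_gartner_ellis {Ω : ℝ → Type*} [∀ t, MeasurableSpace (Ω t)]
    (P : ∀ t, Measure (Ω t)) (hP : ∀ t, IsFiniteMeasure (P t))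
    (X : ∀ t, Ω t → ℝ) (hX : ∀ t, Measurable (X t))
    (w : ℝ → ℝ) (hw : ∀ t, 0 < w t) (hwtop : Tendsto w atTop atTop)
    (a b : ℝ) (h0 : (0 : ℝ) ∈ Set.Ioo a b)
    (e : ℝ → ℝ)
    (he : ∀ s ∈ Set.Icc a b, Tendsto
      (fun t => Real.log ((∫⁻ x, ENNReal.ofReal (Real.exp (s * X t x)) ∂ (P t)).toReal) / w t)
      atTop (nhds (e s)))
    (hecont : ContinuousOn e (Set.Icc a b))
    (hediff : ∀ s ∈ Set.Ioo a b, DifferentiableAt ℝ e s)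
    (da db : ℝ)
    (hda : HasDerivWithinAt e da (Set.Ici a) a)
    (hdb : HasDerivWithinAt e db (Set.Iic b) b)
    (J : Set ℝ) (hJopen : IsOpen J) (hJ : J ⊆ Set.Ioo da db) :
    Tendsto (fun t => Real.log ((P t {x | X t x / w t ∈ J}).toReal) / w t) atTop
      (nhds (-sInf (flt a b e '' J))) := by
  classical
  haveI := hP
  rcases eq_empty_or_nonempty J with hJe | hJne
  · subst hJe
    have hset : ∀ t, {x | X t x / w t ∈ (∅ : Set ℝ)} = (∅ : Set (Ω t)) := fun t => by
      ext x; simp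
    simp only [hset, measure_empty, ENNReal.toReal_zero, Real.log_zero, zero_div,
      image_empty, Real.sInf_empty, neg_zero]
    exact tendsto_const_nhds
  · obtain ⟨θJ, hθJ⟩ := hJne
    have ha0 := h0.1
    have h0b := h0.2
    have hab : a < b := lt_trans ha0 h0b
    have he' : ∀ s ∈ Set.Icc a b,
        Tendsto (fun t => GE.Lam P X w t s) atTop (nhds (e s)) := he
    have hPne : ∀ᶠ t in atTop, P t ≠ 0 :=
      GE.Pne_eventually hab he' hda hdb ⟨θJ, hJ hθJ⟩
    set I := sInf (flt a b e '' J) with hIdef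
    have hbdd : BddBelow (flt a b e '' J) := by
      refine ⟨-e 0, ?_⟩
      rintro y ⟨θ, hθ, rfl⟩
      have := GE.flt_ge (le_of_lt hab) hecont (⟨ha0.le, h0b.le⟩ : (0:ℝ) ∈ Set.Icc a b) θ
      simpa using this
    have hIle : ∀ θ ∈ J, I ≤ flt a b e θ := fun θ hθ => csInf_le hbdd ⟨θ, hθ, rfl⟩
    have hlow : ∀ ε : ℝ, 0 < ε → ∀ᶠ t in atTop,
        (-I - ε ≤ Real.log ((P t {x | X t x / w t ∈ J}).toReal) / w t ∧
          0 < (P t {x | X t x / w t ∈ J}).toReal) := by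
      intro ε hε
      obtain ⟨y, ⟨θ, hθ, rfl⟩, hylt⟩ := exists_lt_of_csInf_lt
        (⟨flt a b e θJ, θJ, hθJ, rfl⟩ : (flt a b e '' J).Nonempty)
        (show I < I + ε/2 by linarith)
      filter_upwards [GE.lower hX hw hwtop ha0 h0b hecont hediff hda hdb he' hPne
        hJopen hJ hθ (show (0:ℝ) < ε/2 by linarith)] with t ht
      have hWt := hw t
      have hne : P t {x | X t x / w t ∈ J} ≠ ⊤ := measure_ne_top _ _
      have hexp : Real.exp (w t * (-flt a b e θ - ε/2)) ≤
          (P t {x | X t x / w t ∈ J}).toReal := by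
        have h1 := ENNReal.toReal_mono hne ht
        rwa [ENNReal.toReal_ofReal (Real.exp_nonneg _)] at h1
      have hpos : 0 < (P t {x | X t x / w t ∈ J}).toReal :=
        lt_of_lt_of_le (Real.exp_pos _) hexp
      refine ⟨?_, hpos⟩
      have hlog : w t * (-flt a b e θ - ε/2) ≤
          Real.log ((P t {x | X t x / w t ∈ J}).toReal) := by
        calc w t * (-flt a b e θ - ε/2)
            = Real.log (Real.exp (w t * (-flt a b e θ - ε/2))) := (Real.log_exp _).symm
          _ ≤ _ := Real.log_le_log (Real.exp_pos _) hexp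
      have h2 := (div_le_div_iff_of_pos_right hWt).2 hlog
      rw [mul_div_cancel_left₀ _ (ne_of_gt hWt)] at h2
      linarith [h2]
    have hup : ∀ ε : ℝ, 0 < ε → ∀ᶠ t in atTop,
        Real.log ((P t {x | X t x / w t ∈ J}).toReal) / w t ≤ -I + ε := by
      intro ε hε
      have hKIcc : closure J ⊆ Set.Icc da db :=
        closure_minimal (fun x hx => Ioo_subset_Icc_self (hJ hx)) isClosed_Icc
      have hK : IsCompact (closure J) :=
        isCompact_Icc.of_isClosed_subset isClosed_closure hKIcc
      have hIK : ∀ q ∈ closure J, I ≤ flt a b e q := by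
        have hsub : J ⊆ {x | I ≤ flt a b e x} := fun θ hθ => hIle θ hθ
        have hcl : IsClosed {x | I ≤ flt a b e x} :=
          isClosed_le continuous_const (GE.flt_cont hab.le hecont)
        exact fun q hq => closure_minimal hsub hcl hq
      have hch : ∀ q : closure J, ∃ s, s ∈ Set.Icc a b ∧ GE.cert P X s ∧
          I - ε/4 ≤ (q:ℝ)*s - e s := by
        intro q
        obtain ⟨s, hs1, hs2, hs3⟩ := GE.approx ha0 h0b hecont he' hda hdb
          (show (0:ℝ) < ε/4 by linarith) (hKIcc q.2).1 (hKIcc q.2).2 (hIK q q.2)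
        exact ⟨s, hs1, hs2, hs3⟩
      choose sq hsq1 hsq2 hsq3 using hch
      have hcover : closure J ⊆ ⋃ q : closure J, Metric.ball (q:ℝ) (ε/(4*(|sq q|+1))) := by
        intro x hx
        exact mem_iUnion.2 ⟨⟨x, hx⟩, Metric.mem_ball_self (by positivity)⟩
      obtain ⟨F, hF⟩ := hK.elim_finite_subcover _ (fun q => Metric.isOpen_ball) hcover
      have hevZ : ∀ᶠ t in atTop, ∀ q ∈ F,
          (GE.Zt P X t (sq q) = ENNReal.ofReal (Real.exp (w t * GE.Lam P X w t (sq q))) ∧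
          GE.Lam P X w t (sq q) ≤ e (sq q) + ε/4) := by
        apply (Finset.eventually_all _).2
        intro q _
        apply (GE.Zform hX hw hPne (hsq2 q)).and
        have := (Metric.tendsto_nhds.1 (he' (sq q) (hsq1 q))) (ε/4) (by linarith)
        apply this.mono
        intro t ht
        rw [Real.dist_eq] at ht
        linarith [(abs_lt.1 ht).2]
      have hwev := hwtop.eventually_ge_atTop (max 1 (Real.log (F.card) / (ε/4)))
      filter_upwards [hevZ, hwev, hlow 1 one_pos] with t ht hwt hplow
      obtain ⟨_, hpos⟩ := hplow
      have hWt : 0 < w t := hw t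
      have hsub2 : {x | X t x / w t ∈ J} ⊆
          ⋃ q ∈ F, {x | X t x / w t ∈ Metric.ball (q:ℝ) (ε/(4*(|sq q|+1)))} := by
        intro x hx
        have h1 := hF (subset_closure hx)
        rw [mem_iUnion₂] at h1
        obtain ⟨i, hi, hball⟩ := h1
        exact mem_iUnion₂.2 ⟨i, hi, hball⟩
      have hmb : P t {x | X t x / w t ∈ J} ≤
          ∑ q ∈ F, P t {x | X t x / w t ∈ Metric.ball (q:ℝ) (ε/(4*(|sq q|+1)))} :=
        le_trans (measure_mono hsub2) (measure_biUnion_finset_le _ _)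
      have hballb : ∀ q ∈ F,
          P t {x | X t x / w t ∈ Metric.ball (q:ℝ) (ε/(4*(|sq q|+1)))}
          ≤ ENNReal.ofReal (Real.exp (w t * (-I + 3*ε/4))) := by
        intro q hq
        obtain ⟨hz, hlam⟩ := ht q hq
        have hptw : ∀ x ∈ {x | X t x / w t ∈ Metric.ball (q:ℝ) (ε/(4*(|sq q|+1)))},
            w t * ((sq q)*(q:ℝ) - |sq q| * (ε/(4*(|sq q|+1)))) ≤ (sq q) * X t x := by
          intro x hx
          have hxb : |X t x / w t - (q:ℝ)| < ε/(4*(|sq q|+1)) := by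
            rw [← Real.dist_eq]
            exact Metric.mem_ball.1 hx
          have habs : |sq q * (X t x / w t - q)| ≤ |sq q| * (ε/(4*(|sq q|+1))) := by
            rw [abs_mul]
            exact mul_le_mul_of_nonneg_left hxb.le (abs_nonneg _)
          have h2 := (abs_le.1 habs).1
          have hid : w t * ((sq q) * (X t x / w t)) = (sq q) * X t x := by
            field_simp
          have h33 : w t * ((sq q)*(q:ℝ) - |sq q| * (ε/(4*(|sq q|+1)))) ≤
              w t * ((sq q) * (X t x / w t)) :=
            mul_le_mul_of_nonneg_left (by linarith [h2]) hWt.le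
          rwa [hid] at h33
        have hchern := GE.chern (μ := P t) (hX t) hptw
        have hzf : GE.Zf (P t) (X t) (sq q) =
            ENNReal.ofReal (Real.exp (w t * GE.Lam P X w t (sq q))) := hz
        rw [hzf] at hchern
        refine le_trans (GE.cancel_upper hchern)
          (ENNReal.ofReal_le_ofReal (Real.exp_le_exp.2 ?_))
        have h1 : |sq q| * (ε/(4*(|sq q|+1))) ≤ ε/4 := by
          rw [mul_comm, div_mul_eq_mul_div, div_le_div_iff₀ (by positivity) (by norm_num)]
          nlinarith [abs_nonneg (sq q), hε.le]
        have h2 := hsq3 q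
        have key : GE.Lam P X w t (sq q) - ((sq q)*(q:ℝ) - |sq q| * (ε/(4*(|sq q|+1))))
            ≤ -I + 3*ε/4 := by linarith [hlam]
        linarith [mul_le_mul_of_nonneg_left key hWt.le]
      have hsum2 : P t {x | X t x / w t ∈ J} ≤
          (F.card : ℝ≥0∞) * ENNReal.ofReal (Real.exp (w t * (-I + 3*ε/4))) := by
        refine le_trans hmb (le_trans (Finset.sum_le_card_nsmul _ _ _ hballb) ?_)
        rw [nsmul_eq_mul]
      have hreal : (P t {x | X t x / w t ∈ J}).toReal ≤
          (F.card : ℝ) * Real.exp (w t * (-I + 3*ε/4)) := by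
        apply ENNReal.toReal_le_of_le_ofReal (by positivity)
        rw [ENNReal.ofReal_mul (by positivity : (0:ℝ) ≤ (F.card:ℝ)), ENNReal.ofReal_natCast]
        exact hsum2
      rcases Nat.eq_zero_or_pos F.card with hc0 | hcpos
      · exfalso
        rw [hc0] at hreal
        simp at hreal
        linarith [hpos, hreal]
      · have hcard1 : (1:ℝ) ≤ (F.card : ℝ) := by exact_mod_cast hcpos
        have hlognn : 0 ≤ Real.log (F.card) := Real.log_nonneg hcard1
        have hlog : Real.log ((P t {x | X t x / w t ∈ J}).toReal) ≤
            Real.log (F.card) + w t * (-I + 3*ε/4) := by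
          calc Real.log ((P t {x | X t x / w t ∈ J}).toReal)
              ≤ Real.log ((F.card:ℝ) * Real.exp (w t * (-I + 3*ε/4))) :=
                Real.log_le_log hpos hreal
            _ = Real.log (F.card) + Real.log (Real.exp (w t * (-I + 3*ε/4))) :=
                Real.log_mul (by linarith) (Real.exp_ne_zero _)
            _ = _ := by rw [Real.log_exp]
        have hlogc : Real.log ((F.card:ℝ)) / w t ≤ ε/4 := by
          have h1 : Real.log (F.card) / (ε/4) ≤ w t := le_trans (le_max_right _ _) hwt
          rw [div_le_iff₀ (by linarith)] at h1
          rw [div_le_iff₀ hWt]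
          linarith
        calc Real.log ((P t {x | X t x / w t ∈ J}).toReal) / w t
            ≤ (Real.log (F.card) + w t * (-I + 3*ε/4)) / w t := (div_le_div_iff_of_pos_right hWt).2 hlog
          _ = Real.log ((F.card:ℝ)) / w t + (-I + 3*ε/4) := by
              rw [add_div, mul_div_cancel_left₀ _ (ne_of_gt hWt)]
          _ ≤ ε/4 + (-I + 3*ε/4) := by linarith [hlogc]
          _ = -I + ε := by ring
    rw [Metric.tendsto_atTop]
    intro ε hε
    have hcomb := (hlow (ε/2) (by linarith)).and (hup (ε/2) (by linarith))
    obtain ⟨N, hN⟩ := eventually_atTop.1 hcomb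
    refine ⟨N, fun t htN => ?_⟩
    obtain ⟨⟨h1, _⟩, h2⟩ := hN t htN
    rw [Real.dist_eq]
    have h3 : |Real.log ((P t {x | X t x / w t ∈ J}).toReal) / w t - (-I)| ≤ ε/2 :=
      abs_le.2 ⟨by linarith, by linarith⟩
    linarith
end
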